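/- arXiv:1111.1825 — 3 statements merged into one kernel-verified Lean document; each statement's English description precedes it below -/
import Mathlib

section
/- Let F⊂ℝ be compact with Lebesgue measure zero, fractal string (l_j), D∈(0,1) and L>0. If the S-content satisfies 𝓢^D(F) = 2^{1−D} L^D / (κ_{1−D}(1−D)), then l_j ~ L j^{−1/D} as j→∞. -/
open Filter Set Topology MeasureTheory Metric ENNReal

/-- `κ_t = π^{t/2} / Γ(1 + t/2)`. -/
noncomputable def kappa (t : ℝ) : ℝ := Real.pi ^ (t / 2) / Real.Gamma (1 + t / 2)

/-- `(l_j)` is the fractal string of the compact set `F ⊂ ℝ`: a non-increasing sequence of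
positive lengths of the (pairwise disjoint) bounded complementary open intervals of `F`. -/
def IsFractalString (F : Set ℝ) (l : ℕ → ℝ) : Prop :=
  Antitone l ∧ (∀ j, 0 < l j) ∧
  ∃ a b : ℕ → ℝ,
    Pairwise (Function.onFun Disjoint fun j => Set.Ioo (a j) (b j)) ∧
    (∀ j, a j < b j ∧ b j - a j = l j) ∧
    (convexHull ℝ F) \ F = ⋃ j, Set.Ioo (a j) (b j)

/-- Lower S-content of `F ⊂ ℝ`: `liminf_{r→0} 𝓗⁰(∂F_r)/((1−D)κ_{1−D} r^{−D})`. -/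
noncomputable def lowerSContent (F : Set ℝ) (D : ℝ) : ℝ≥0∞ :=
  Filter.liminf
    (fun r : ℝ => μH[(0 : ℝ)] (frontier (cthickening r F)) /
      ENNReal.ofReal ((1 - D) * kappa (1 - D) * r ^ (-D)))
    (𝓝[>] (0 : ℝ))

/-- Upper S-content of `F ⊂ ℝ`. -/
noncomputable def upperSContent (F : Set ℝ) (D : ℝ) : ℝ≥0∞ :=
  Filter.limsup
    (fun r : ℝ => μH[(0 : ℝ)] (frontier (cthickening r F)) /
      ENNReal.ofReal ((1 - D) * kappa (1 - D) * r ^ (-D)))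
    (𝓝[>] (0 : ℝ))

set_option linter.unusedVariables false in
set_option maxHeartbeats 1000000 in
lemma hmeas_finset (s : Finset ℝ) : μH[(0:ℝ)] (s : Set ℝ) = s.card := by
  classical
  induction s using Finset.induction with
  | empty => simp
  | @insert a s hx ih =>
    rw [Finset.coe_insert, Set.insert_eq,
      measure_union (by simpa using hx) s.finite_toSet.isClosed.measurableSet,
      MeasureTheory.Measure.hausdorffMeasure_zero_singleton, ih,
      Finset.card_insert_of_notMem hx]
    simp [add_comm]

variable {F : Set ℝ} {m M r : ℝ} {a b : ℕ → ℝ}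

lemma card_frontier (hmM : m < M) (hr : 0 < r)
    (haI : ∀ j, a j ∈ Icc m M) (hbI : ∀ j, b j ∈ Icc m M)
    (hdisj : Pairwise (Function.onFun Disjoint fun j => Ioo (a j) (b j)))
    (T : Finset ℕ) (hT : ∀ j, j ∈ T ↔ 2 * r < b j - a j) :
    μH[(0:ℝ)] (({m - r, M + r} : Set ℝ) ∪ ⋃ j ∈ T, ({a j + r, b j - r} : Set ℝ))
      = (2 + 2 * T.card : ℕ) := by
  classical
  have hmem : ∀ j ∈ T, ∀ x ∈ ({a j + r, b j - r} : Finset ℝ), x ∈ Ioo (a j) (b j) := by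
    intro j hj x hx
    have h2 := (hT j).1 hj
    simp only [Finset.mem_insert, Finset.mem_singleton] at hx
    rcases hx with rfl | rfl
    · exact ⟨by linarith, by linarith⟩
    · exact ⟨by linarith, by linarith⟩
  set B : Finset ℝ := {m - r, M + r} ∪ T.biUnion (fun j => {a j + r, b j - r}) with hB
  have hBs : (B : Set ℝ) = ({m - r, M + r} : Set ℝ) ∪ ⋃ j ∈ T, ({a j + r, b j - r} : Set ℝ) := by
    simp only [hB, Finset.coe_union, Finset.coe_biUnion, Finset.coe_insert,
      Finset.coe_singleton]
    rfl
  rw [← hBs, hmeas_finset]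
  congr 1
  have hd1 : Disjoint ({m - r, M + r} : Finset ℝ) (T.biUnion fun j => {a j + r, b j - r}) := by
    rw [Finset.disjoint_left]
    intro x hx hx'
    rw [Finset.mem_biUnion] at hx'
    obtain ⟨j, hjT, hj⟩ := hx'
    have h1 := (haI j).1
    have h2 := (hbI j).2
    have h3 := (hmem j hjT x hj)
    simp only [Finset.mem_insert, Finset.mem_singleton] at hx
    rcases hx with rfl | rfl
    · have := h3.1; linarith
    · have := h3.2; linarith
  rw [hB, Finset.card_union_of_disjoint hd1, Finset.card_biUnion, Finset.card_pair (by
    intro h; linarith)]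
  · have : ∀ j ∈ T, ({a j + r, b j - r} : Finset ℝ).card = 2 := by
      intro j hj
      have h2 := (hT j).1 hj
      exact Finset.card_pair (by intro h; linarith)
    rw [Finset.sum_congr rfl this, Finset.sum_const, smul_eq_mul, mul_comm]
  · intro i hi j hj hij
    rw [Function.onFun, Finset.disjoint_left]
    intro x hxi hxj
    exact (hdisj hij).le_bot (⟨hmem i hi x hxi, hmem j hj x hxj⟩ :
      x ∈ Ioo (a i) (b i) ∩ Ioo (a j) (b j))

section AuxGeom
variable {F : Set ℝ} {m M r : ℝ} {a b : ℕ → ℝ}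

lemma cthick_descr (hF : IsCompact F) (hm : m ∈ F) (hM : M ∈ F) (hFI : F ⊆ Icc m M)
    (hr : 0 < r) (haF : ∀ j, a j ∈ F) (hbF : ∀ j, b j ∈ F)
    (hgap : ∀ j, Ioo (a j) (b j) ∩ F = ∅)
    (hcov : Icc m M \ F ⊆ ⋃ j, Ioo (a j) (b j)) :
    cthickening r F =
      Icc (m - r) (M + r) \ ⋃ j ∈ {j : ℕ | 2 * r < b j - a j}, Ioo (a j + r) (b j - r) := by
  have hmem : ∀ x : ℝ, x ∈ cthickening r F ↔ ∃ y ∈ F, |x - y| ≤ r := by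
    intro x
    rw [hF.cthickening_eq_biUnion_closedBall hr.le]
    simp [Metric.mem_closedBall, Real.dist_eq, and_comm]
  ext x
  rw [hmem]
  constructor
  · rintro ⟨y, hyF, hxy⟩
    have h1 := hFI hyF
    rw [abs_le] at hxy
    refine ⟨⟨by linarith [h1.1, hxy.2], by linarith [h1.2, hxy.1]⟩, ?_⟩
    simp only [mem_iUnion, mem_Ioo, not_exists, mem_setOf_eq, exists_prop, not_and]
    rintro j hj hj1 hj2
    have : y ∈ Ioo (a j) (b j) ∩ F := ⟨⟨by linarith [hxy.1], by linarith [hxy.2]⟩, hyF⟩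
    rw [hgap j] at this; exact this
  · rintro ⟨⟨hx1, hx2⟩, hx3⟩
    simp only [mem_iUnion, mem_Ioo, not_exists, mem_setOf_eq, exists_prop, not_and] at hx3
    by_cases hxm : x ≤ m
    · exact ⟨m, hm, by rw [abs_le]; constructor <;> linarith⟩
    by_cases hxM : M ≤ x
    · exact ⟨M, hM, by rw [abs_le]; constructor <;> linarith⟩
    push_neg at hxm hxM
    by_cases hxF : x ∈ F
    · exact ⟨x, hxF, by simp [hr.le]⟩
    obtain ⟨j, hj⟩ : ∃ j, x ∈ Ioo (a j) (b j) := by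
      have := hcov ⟨⟨hxm.le, hxM.le⟩, hxF⟩
      simpa using this
    obtain ⟨hja, hjb⟩ := hj
    by_cases h1 : x ≤ a j + r
    · exact ⟨a j, haF j, by rw [abs_le]; constructor <;> linarith⟩
    by_cases h2 : b j - r ≤ x
    · exact ⟨b j, hbF j, by rw [abs_le]; constructor <;> linarith⟩
    push_neg at h1 h2
    exact (hx3 j (by linarith) h1 h2).elim

set_option maxHeartbeats 1000000 in
lemma frontier_descr'  (hm : m ∈ F) (hM : M ∈ F) (hFI : F ⊆ Icc m M) (hmM : m < M) (hr : 0 < r)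
    (haF : ∀ j, a j ∈ F) (hbF : ∀ j, b j ∈ F)
    (hdisj : Pairwise (Function.onFun Disjoint fun j => Ioo (a j) (b j)))
    (T : Finset ℕ) (hT : ∀ j, j ∈ T ↔ 2 * r < b j - a j)
    (hS : cthickening r F = Icc (m - r) (M + r) \ ⋃ j ∈ T, Ioo (a j + r) (b j - r)) :
    frontier (cthickening r F) =
      ({m - r, M + r} : Set ℝ) ∪ ⋃ j ∈ T, ({a j + r, b j - r} : Set ℝ) := by
  have haI : ∀ j, a j ∈ Icc m M := fun j => hFI (haF j)
  have hbI : ∀ j, b j ∈ Icc m M := fun j => hFI (hbF j)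
  have hsub : ∀ j ∈ T, Icc (a j + r) (b j - r) ⊆ Ioo (a j) (b j) := by
    intro j hj x hx
    have h2 := (hT j).1 hj
    exact ⟨by linarith [hx.1], by linarith [hx.2]⟩
  set U : Set ℝ := ⋃ j ∈ T, Ioo (a j + r) (b j - r) with hU
  set K : Set ℝ := ⋃ j ∈ T, Icc (a j + r) (b j - r) with hK
  have hKc : IsClosed K := T.finite_toSet.isClosed_biUnion fun _ _ => isClosed_Icc
  have hUK : U ⊆ K := iUnion₂_mono fun j _ => Ioo_subset_Icc_self
  have hint : interior (cthickening r F) = Ioo (m - r) (M + r) \ K := by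
    apply Subset.antisymm
    · intro x hx
      have hxS : x ∈ Icc (m - r) (M + r) \ U := by rw [← hS]; exact interior_subset hx
      obtain ⟨ε, hε, hball⟩ := Metric.isOpen_iff.1 isOpen_interior x hx
      have hballS : ∀ y, |y - x| < ε → y ∈ Icc (m - r) (M + r) ∧ y ∉ U := by
        intro y hy
        have : y ∈ Icc (m - r) (M + r) \ U := by
          rw [← hS]
          exact interior_subset (hball (by simpa [Metric.mem_ball, Real.dist_eq] using hy))
        exact this
      have h1 : m - r < x := by
        by_contra h
        push_neg at h
        have hx' := hxS.1
        have := (hballS (x - ε / 2) (by rw [abs_of_nonpos] <;> linarith)).1.1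
        linarith
      have h2 : x < M + r := by
        by_contra h
        push_neg at h
        have hx' := hxS.1
        have := (hballS (x + ε / 2) (by rw [abs_of_nonneg] <;> linarith)).1.2
        linarith
      refine ⟨⟨h1, h2⟩, ?_⟩
      intro hxK
      simp only [hK, mem_iUnion, exists_prop] at hxK
      obtain ⟨j, hjT, hj1, hj2⟩ := hxK
      have hcd : a j + r < b j - r := by have := (hT j).1 hjT; linarith
      have hxU : x ∉ U := hxS.2
      have hxIoo : x ∉ Ioo (a j + r) (b j - r) := by
        intro h; exact hxU (mem_biUnion hjT h)
      rw [mem_Ioo, not_and_or, not_lt, not_lt] at hxIoo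
      have hmin1 := min_le_left ε (b j - r - (a j + r))
      have hmin2 := min_le_right ε (b j - r - (a j + r))
      have hminpos : 0 < min ε (b j - r - (a j + r)) := lt_min hε (by linarith)
      rcases hxIoo with hxc | hxd
      · have hxc' : x = a j + r := le_antisymm hxc hj1
        set y := x + min ε (b j - r - (a j + r)) / 2 with hy
        have := (hballS y (by rw [hy]; rw [abs_of_nonneg] <;> [skip; linarith] <;> simp <;> linarith)).2
        exact this (mem_biUnion hjT ⟨by rw [hy, hxc']; linarith, by rw [hy, hxc']; linarith⟩)
      · have hxd' : x = b j - r := le_antisymm hj2 hxd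
        set y := x - min ε (b j - r - (a j + r)) / 2 with hy
        have := (hballS y (by rw [hy]; rw [abs_of_nonpos] <;> [skip; linarith] <;> simp <;> linarith)).2
        exact this (mem_biUnion hjT ⟨by rw [hy, hxd']; linarith, by rw [hy, hxd']; linarith⟩)
    · apply interior_maximal
      · intro x hx
        rw [hS]
        exact ⟨Ioo_subset_Icc_self hx.1, fun h => hx.2 (hUK h)⟩
      · exact isOpen_Ioo.sdiff hKc
  rw [isClosed_cthickening.frontier_eq, hint, hS]
  ext x
  constructor
  · rintro ⟨⟨hxI, hxU⟩, hxV⟩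
    rw [mem_diff, not_and_or, not_not] at hxV
    rcases hxV with hIoo | hxK
    · left
      rw [mem_Ioo, not_and_or, not_lt, not_lt] at hIoo
      rcases hIoo with h | h
      · exact Or.inl (le_antisymm h (mem_Icc.1 hxI).1)
      · exact Or.inr (le_antisymm (mem_Icc.1 hxI).2 h)
    · simp only [hK, mem_iUnion, exists_prop, mem_Icc] at hxK
      obtain ⟨j, hjT, hj1, hj2⟩ := hxK
      have hxIoo : x ∉ Ioo (a j + r) (b j - r) := fun h => hxU (mem_biUnion hjT h)
      rw [mem_Ioo, not_and_or, not_lt, not_lt] at hxIoo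
      right
      refine mem_biUnion hjT ?_
      rcases hxIoo with h | h
      · exact Or.inl (le_antisymm h hj1)
      · exact Or.inr (le_antisymm hj2 h)
  · intro hx
    rcases hx with (rfl | rfl) | hx
    · refine ⟨⟨⟨le_refl _, by linarith⟩, ?_⟩, fun h => absurd (mem_Ioo.1 h.1).1 (lt_irrefl _)⟩
      intro h
      simp only [hU, mem_iUnion, exists_prop, mem_Ioo] at h
      obtain ⟨j, hjT, hj1, hj2⟩ := h
      have := (haI j).1
      linarith
    · refine ⟨⟨⟨by linarith, le_refl _⟩, ?_⟩, fun h => absurd (mem_Ioo.1 h.1).2 (lt_irrefl _)⟩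
      intro h
      simp only [hU, mem_iUnion, exists_prop, mem_Ioo] at h
      obtain ⟨j, hjT, hj1, hj2⟩ := h
      have := (hbI j).2
      linarith
    · rw [mem_iUnion₂] at hx
      obtain ⟨j, hjT, hx⟩ := hx
      have hcd := (hT j).1 hjT
      have hxab : x ∈ Ioo (a j) (b j) := by
        rcases hx with rfl | rfl
        · exact ⟨by linarith, by linarith⟩
        · exact ⟨by linarith, by linarith⟩
      have hxK : x ∈ K := by
        rcases hx with rfl | rfl
        · exact mem_biUnion hjT ⟨le_refl _, by linarith⟩
        · exact mem_biUnion hjT ⟨by linarith, le_refl _⟩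
      have hxU : x ∉ U := by
        intro h
        simp only [hU, mem_iUnion, exists_prop, mem_Ioo] at h
        obtain ⟨i, hiT, hi1, hi2⟩ := h
        by_cases hij : i = j
        · subst hij
          rcases hx with rfl | rfl
          · exact absurd hi1 (lt_irrefl _)
          · exact absurd hi2 (lt_irrefl _)
        · exact (hdisj hij).le_bot (⟨hsub i hiT ⟨hi1.le, hi2.le⟩, hxab⟩ :
            x ∈ Ioo (a i) (b i) ∩ Ioo (a j) (b j))
      have h1 := (haI j).1
      have h2 := (hbI j).2
      have hb1 := (mem_Ioo.1 hxab).1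
      have hb2 := (mem_Ioo.1 hxab).2
      exact ⟨⟨⟨by linarith, by linarith⟩, hxU⟩, fun h => h.2 hxK⟩

end AuxGeom

set_option maxHeartbeats 1000000 in
lemma asym_key {l : ℕ → ℝ} {N : ℝ → ℕ} {D L : ℝ} (hDpos : 0 < D) (hL : 0 < L)
    (hpos : ∀ j, 0 < l j) (hl0 : Tendsto l atTop (𝓝 0))
    (hN1 : ∀ j, N (l j) ≤ j)
    (hN2 : ∀ j (t : ℝ), 0 < t → t < l j → j + 1 ≤ N t)
    (hlim : Tendsto (fun t => (1 + (N t : ℝ)) * t ^ D) (𝓝[>] 0) (𝓝 (L ^ D))) :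
    Tendsto (fun j : ℕ => (1 + (j : ℝ)) * l j ^ D) atTop (𝓝 (L ^ D)) := by
  have hlmem : Tendsto l atTop (𝓝[>] 0) :=
    tendsto_nhdsWithin_of_tendsto_nhds_of_eventually_within _ hl0
      (Eventually.of_forall fun j => hpos j)
  have hg : Tendsto (fun j => (1 + (N (l j) : ℝ)) * l j ^ D) atTop (𝓝 (L ^ D)) :=
    hlim.comp hlmem
  rw [tendsto_order]
  constructor
  · intro x hx
    filter_upwards [hg.eventually_const_lt hx] with j hj
    calc x < (1 + (N (l j) : ℝ)) * l j ^ D := hj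
      _ ≤ (1 + (j : ℝ)) * l j ^ D := by
          apply mul_le_mul_of_nonneg_right _ (Real.rpow_nonneg (hpos j).le D)
          have := hN1 j
          push_cast
          linarith [(Nat.cast_le (α := ℝ)).2 this]
  · intro y hy
    have hLD : 0 < L ^ D := Real.rpow_pos_of_pos hL D
    have hy0 : 0 < y := hLD.trans hy
    set mid := (L ^ D + y) / 2 with hmid
    have hmid1 : L ^ D < mid := by rw [hmid]; linarith
    have hmid2 : mid < y := by rw [hmid]; linarith
    have hmidpos : 0 < mid := hLD.trans hmid1
    set ρ := mid / y with hρ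
    have hρ0 : 0 < ρ := div_pos hmidpos hy0
    have hρ1 : ρ < 1 := (div_lt_one hy0).2 hmid2
    set c := ρ ^ (1 / D) with hc
    have hc0 : 0 < c := Real.rpow_pos_of_pos hρ0 _
    have hc1 : c < 1 := Real.rpow_lt_one hρ0.le hρ1 (by positivity)
    have hcD : c ^ D = ρ := by
      rw [hc, ← Real.rpow_mul hρ0.le, one_div, inv_mul_cancel₀ hDpos.ne', Real.rpow_one]
    have hclmem : Tendsto (fun j => c * l j) atTop (𝓝[>] 0) := by
      apply tendsto_nhdsWithin_of_tendsto_nhds_of_eventually_within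
      · simpa using hl0.const_mul c
      · exact Eventually.of_forall fun j => mul_pos hc0 (hpos j)
    have hgc : Tendsto (fun j => (1 + (N (c * l j) : ℝ)) * (c * l j) ^ D) atTop (𝓝 (L ^ D)) :=
      hlim.comp hclmem
    filter_upwards [hgc.eventually_lt_const hmid1] with j hj
    have hN : (j : ℝ) + 2 ≤ 1 + (N (c * l j) : ℝ) := by
      have := hN2 j (c * l j) (mul_pos hc0 (hpos j))
        (by nlinarith [hpos j])
      have h' := (Nat.cast_le (α := ℝ)).2 this
      push_cast at h'
      linarith
    have hlD : 0 < l j ^ D := Real.rpow_pos_of_pos (hpos j) D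
    have hkey : ((j : ℝ) + 2) * (c * l j) ^ D ≤ (1 + (N (c * l j) : ℝ)) * (c * l j) ^ D :=
      mul_le_mul_of_nonneg_right hN (Real.rpow_nonneg (mul_pos hc0 (hpos j)).le D)
    have hmul : (c * l j) ^ D = ρ * l j ^ D := by
      rw [Real.mul_rpow hc0.le (hpos j).le, hcD]
    have h5 : ((j : ℝ) + 2) * (ρ * l j ^ D) < mid := by
      rw [← hmul]; exact lt_of_le_of_lt hkey hj
    have hmidy : mid = ρ * y := by rw [hρ]; field_simp
    rw [hmidy] at h5
    nlinarith [hρ0, hlD]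

lemma asym_conv {l : ℕ → ℝ} {D L : ℝ} (hDpos : 0 < D) (hL : 0 < L)
    (hpos : ∀ j, 0 < l j)
    (h : Tendsto (fun j : ℕ => (1 + (j : ℝ)) * l j ^ D) atTop (𝓝 (L ^ D))) :
    Tendsto (fun j : ℕ => l j * (j : ℝ) ^ (1 / D)) atTop (𝓝 L) := by
  have h1 : Tendsto (fun j : ℕ => ((1 + (j : ℝ)) * l j ^ D) ^ (1 / D)) atTop
      (𝓝 ((L ^ D) ^ (1 / D))) :=
    h.rpow_const (Or.inr (by positivity))
  have hLD : (L ^ D : ℝ) ^ (1 / D) = L := by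
    rw [← Real.rpow_mul hL.le, mul_one_div, div_self hDpos.ne', Real.rpow_one]
  rw [hLD] at h1
  have h2 : ∀ j : ℕ, ((1 + (j : ℝ)) * l j ^ D) ^ (1 / D) = (1 + (j : ℝ)) ^ (1 / D) * l j := by
    intro j
    rw [Real.mul_rpow (by positivity) (Real.rpow_nonneg (hpos j).le D),
      ← Real.rpow_mul (hpos j).le, mul_one_div, div_self hDpos.ne', Real.rpow_one]
  rw [show (fun j : ℕ => ((1 + (j : ℝ)) * l j ^ D) ^ (1 / D)) =
      fun j : ℕ => (1 + (j : ℝ)) ^ (1 / D) * l j from funext h2] at h1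
  have h3 : Tendsto (fun j : ℕ => ((j : ℝ) / (1 + (j : ℝ))) ^ (1 / D)) atTop (𝓝 1) := by
    have : Tendsto (fun j : ℕ => (j : ℝ) / ((j : ℝ) + 1)) atTop (𝓝 1) :=
      tendsto_natCast_div_add_atTop 1
    have := this.rpow_const (Or.inr (by positivity : (0:ℝ) ≤ 1 / D))
    rw [Real.one_rpow] at this
    convert this using 2 with j
    rw [add_comm]
  have h4 := h1.mul h3
  rw [mul_one] at h4
  apply h4.congr
  intro j
  have hj1 : (0:ℝ) ≤ (j:ℝ) / (1 + (j:ℝ)) := by positivity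
  have h10 : (1:ℝ) + (j:ℝ) ≠ 0 := by positivity
  rw [mul_comm ((1 + (j:ℝ)) ^ (1 / D)) (l j), mul_assoc]
  congr 1
  rw [← Real.mul_rpow (by positivity) hj1]
  congr 1
  rw [mul_comm]
  exact div_mul_cancel₀ _ h10

set_option maxHeartbeats 2000000 in
theorem string_asymptotics_of_scontent_eq (F : Set ℝ) (hF : IsCompact F)
    (hF0 : volume F = 0) (l : ℕ → ℝ) (hl : IsFractalString F l)
    (D : ℝ) (hD : D ∈ Set.Ioo (0 : ℝ) 1) (L : ℝ) (hL : 0 < L)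
    (hS : Filter.Tendsto
      (fun r : ℝ => μH[(0 : ℝ)] (frontier (cthickening r F)) /
        ENNReal.ofReal ((1 - D) * kappa (1 - D) * r ^ (-D)))
      (𝓝[>] (0 : ℝ))
      (𝓝 (ENNReal.ofReal ((2 : ℝ) ^ (1 - D) * L ^ D / (kappa (1 - D) * (1 - D)))))) :
    Filter.Tendsto (fun j : ℕ => l j * (j : ℝ) ^ (1 / D)) Filter.atTop (𝓝 L) := by
  obtain ⟨hanti, hpos, a, b, hdisj, hab, hhull⟩ := hl
  obtain ⟨hDpos, hD1⟩ := hD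

  -- F nonempty
  have hne : F.Nonempty := by
    by_contra h
    rw [not_nonempty_iff_eq_empty] at h
    subst h
    simp only [convexHull_empty, empty_diff] at hhull
    have := (hhull ▸ mem_iUnion.2 ⟨0, mem_Ioo.2 ⟨?_, ?_⟩⟩ :
      ((a 0 + b 0)/2) ∈ (∅ : Set ℝ))
    · exact this
    · linarith [(hab 0).1]
    · linarith [(hab 0).1]
  set m := sInf F with hm
  set M := sSup F with hM
  have hmF : m ∈ F := hF.sInf_mem hne
  have hMF : M ∈ F := hF.sSup_mem hne
  have hFI : F ⊆ Icc m M := fun x hx =>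
    ⟨csInf_le hF.bddBelow hx, le_csSup hF.bddAbove hx⟩
  have hmM' : m ≤ M := (hFI hmF).2
  have hhull' : convexHull ℝ F = Icc m M := by
    apply Subset.antisymm
    · exact convexHull_min hFI (convex_Icc m M)
    · rw [← segment_eq_Icc hmM']
      exact segment_subset_convexHull hmF hMF
  rw [hhull'] at hhull
  have hIoosub : ∀ j, Ioo (a j) (b j) ⊆ Icc m M \ F := by
    intro j
    rw [hhull]
    exact subset_iUnion (fun j => Ioo (a j) (b j)) j
  have haIcc : ∀ j, a j ∈ Icc m M := by
    intro j
    constructor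
    · by_contra h
      push_neg at h
      set x := (a j + min (b j) m) / 2 with hx
      have h1 : a j < min (b j) m := lt_min (hab j).1 h
      have h2 : x ∈ Ioo (a j) (b j) := ⟨by rw [hx]; linarith,
        by rw [hx]; linarith [min_le_left (b j) m]⟩
      have := (hIoosub j h2).1.1
      have : x < m := by rw [hx]; linarith [min_le_right (b j) m]
      linarith [(hIoosub j h2).1.1]
    · have h2 : (a j + b j)/2 ∈ Ioo (a j) (b j) := ⟨by linarith [(hab j).1], by linarith [(hab j).1]⟩
      have := (hIoosub j h2).1.2
      linarith [(hab j).1]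
  have hbIcc : ∀ j, b j ∈ Icc m M := by
    intro j
    constructor
    · have h2 : (a j + b j)/2 ∈ Ioo (a j) (b j) := ⟨by linarith [(hab j).1], by linarith [(hab j).1]⟩
      have := (hIoosub j h2).1.1
      linarith [(hab j).1]
    · by_contra h
      push_neg at h
      set x := (max (a j) M + b j) / 2 with hx
      have h1 : max (a j) M < b j := max_lt (hab j).1 h
      have h2 : x ∈ Ioo (a j) (b j) := ⟨by rw [hx]; linarith [le_max_left (a j) M],
        by rw [hx]; linarith⟩
      have := (hIoosub j h2).1.2
      have : M < x := by rw [hx]; linarith [le_max_right (a j) M]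
      linarith [(hIoosub j h2).1.2]
  have haF : ∀ j, a j ∈ F := by
    intro j
    by_contra h
    have haM : a j ∈ Icc m M := haIcc j
    have : a j ∈ ⋃ i, Ioo (a i) (b i) := by rw [← hhull]; exact ⟨haM, h⟩
    obtain ⟨i, hi⟩ := mem_iUnion.1 this
    have hij : i ≠ j := by
      rintro rfl
      exact absurd hi.1 (lt_irrefl _)
    set x := (a j + min (b i) (b j)) / 2 with hx
    have h1 : a j < min (b i) (b j) := lt_min hi.2 (hab j).1
    have hxi : x ∈ Ioo (a i) (b i) :=
      ⟨by rw [hx]; linarith [hi.1], by rw [hx]; linarith [min_le_left (b i) (b j)]⟩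
    have hxj : x ∈ Ioo (a j) (b j) :=
      ⟨by rw [hx]; linarith, by rw [hx]; linarith [min_le_right (b i) (b j)]⟩
    exact (hdisj hij).le_bot (⟨hxi, hxj⟩ : x ∈ Ioo (a i) (b i) ∩ Ioo (a j) (b j))
  have hbF : ∀ j, b j ∈ F := by
    intro j
    by_contra h
    have : b j ∈ ⋃ i, Ioo (a i) (b i) := by rw [← hhull]; exact ⟨hbIcc j, h⟩
    obtain ⟨i, hi⟩ := mem_iUnion.1 this
    have hij : i ≠ j := by
      rintro rfl
      exact absurd hi.2 (lt_irrefl _)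
    set x := (max (a i) (a j) + b j) / 2 with hx
    have h1 : max (a i) (a j) < b j := max_lt hi.1 (hab j).1
    have hxi : x ∈ Ioo (a i) (b i) :=
      ⟨by rw [hx]; linarith [le_max_left (a i) (a j)], by rw [hx]; linarith [hi.2]⟩
    have hxj : x ∈ Ioo (a j) (b j) :=
      ⟨by rw [hx]; linarith [le_max_right (a i) (a j)], by rw [hx]; linarith⟩
    exact (hdisj hij).le_bot (⟨hxi, hxj⟩ : x ∈ Ioo (a i) (b i) ∩ Ioo (a j) (b j))
  have hgap : ∀ j, Ioo (a j) (b j) ∩ F = ∅ := by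
    intro j
    rw [eq_empty_iff_forall_notMem]
    rintro x ⟨hx1, hx2⟩
    exact (hIoosub j hx1).2 hx2
  have hcov : Icc m M \ F ⊆ ⋃ j, Ioo (a j) (b j) := hhull.subset
  have hmM : m < M := by
    have := (haIcc 0).1
    have := (hbIcc 0).2
    linarith [(hab 0).1]
  
  -- tsum finite
  have htsum : ∑' j, volume (Ioo (a j) (b j)) ≠ ⊤ := by
    rw [← measure_iUnion hdisj (fun j => measurableSet_Ioo)]
    have hsub : (⋃ j, Ioo (a j) (b j)) ⊆ Icc m M :=
      iUnion_subset fun j => (hIoosub j).trans diff_subset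
    exact ((measure_mono hsub).trans_lt (by simp [measure_Icc_lt_top])).ne
  have hl0 : Tendsto l atTop (𝓝 0) := by
    have h1 := ENNReal.tendsto_cofinite_zero_of_tsum_ne_top htsum
    rw [Nat.cofinite_eq_atTop] at h1
    have h2 := (ENNReal.tendsto_toReal (by simp)).comp h1
    simp only [Function.comp_def, ENNReal.toReal_zero] at h2
    apply h2.congr
    intro j
    rw [Real.volume_Ioo, ENNReal.toReal_ofReal (by linarith [(hab j).1]), (hab j).2]
  -- finiteness
  have hfin : ∀ t : ℝ, 0 < t → {j : ℕ | t < l j}.Finite := by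
    intro t ht
    have h1 : ∀ᶠ j in atTop, l j < t := hl0.eventually_lt_const ht
    rw [← Nat.cofinite_eq_atTop, eventually_cofinite] at h1
    exact h1.subset fun j hj => by simp only [mem_setOf_eq, not_lt]; exact (mem_setOf_eq ▸ hj).le
  -- N
  set N : ℝ → ℕ := fun t => {j : ℕ | t < l j}.ncard with hN
  have hN1 : ∀ j, N (l j) ≤ j := by
    intro j
    have hsub : {i : ℕ | l j < l i} ⊆ ↑(Finset.range j) := by
      intro i hi
      simp only [Finset.coe_range, mem_Iio]
      by_contra h
      push_neg at h
      exact absurd (hanti h) (not_le.2 hi)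
    calc N (l j) ≤ (↑(Finset.range j) : Set ℕ).ncard :=
          Set.ncard_le_ncard hsub (Finset.range j).finite_toSet
      _ = j := by rw [Set.ncard_coe_finset, Finset.card_range]
  have hN2 : ∀ (j : ℕ) (t : ℝ), 0 < t → t < l j → j + 1 ≤ N t := by
    intro j t ht htl
    have hsub : ↑(Finset.range (j + 1)) ⊆ {i : ℕ | t < l i} := by
      intro i hi
      simp only [Finset.coe_range, mem_Iio] at hi
      exact lt_of_lt_of_le htl (hanti (Nat.lt_succ_iff.1 hi))
    calc j + 1 = (↑(Finset.range (j + 1)) : Set ℕ).ncard := by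
          rw [Set.ncard_coe_finset, Finset.card_range]
      _ ≤ N t := Set.ncard_le_ncard hsub (hfin t ht)
  -- N via Finset
  have hNT : ∀ (t : ℝ) (ht : 0 < t), N t = (hfin t ht).toFinset.card := by
    intro t ht
    simp only [hN]
    rw [Set.ncard_eq_toFinset_card _ (hfin t ht)]
  
  -- frontier measure formula
  have hμ : ∀ r : ℝ, 0 < r →
      μH[(0:ℝ)] (frontier (cthickening r F)) = ((2 + 2 * N (2*r) : ℕ) : ℝ≥0∞) := by
    intro r hr
    have hfin2r := hfin (2*r) (by linarith)
    set T : Finset ℕ := hfin2r.toFinset with hTdef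
    have hT : ∀ j, j ∈ T ↔ 2*r < b j - a j := by
      intro j
      rw [hTdef, Set.Finite.mem_toFinset, mem_setOf_eq, (hab j).2]
    have hdescr := cthick_descr hF hmF hMF hFI hr haF hbF hgap hcov
    have hsetT : (⋃ j ∈ {j : ℕ | 2*r < b j - a j}, Ioo (a j + r) (b j - r))
        = ⋃ j ∈ T, Ioo (a j + r) (b j - r) := by
      have h' : {j : ℕ | 2*r < b j - a j} = ↑T := by
        ext j; rw [Finset.mem_coe, hT]; rfl
      rw [h']
      rfl
    rw [hsetT] at hdescr
    have hfront := frontier_descr' hmF hMF hFI hmM hr haF hbF hdisj T hT hdescr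
    rw [hfront, card_frontier hmM hr haIcc hbIcc hdisj T hT]
    congr 2
    rw [hNT (2*r) (by linarith), hTdef]
  -- extract real limit
  have hlim : Tendsto (fun t : ℝ => (1 + (N t : ℝ)) * t ^ D) (𝓝[>] 0) (𝓝 (L ^ D)) := by
    have hκ : 0 < kappa (1 - D) := by
      unfold kappa
      exact div_pos (Real.rpow_pos_of_pos Real.pi_pos _) (Real.Gamma_pos_of_pos (by linarith))
    have hc : 0 < (1 - D) * kappa (1 - D) := mul_pos (by linarith) hκ
    have hA : 0 ≤ (2:ℝ) ^ (1-D) * L ^ D / (kappa (1-D) * (1-D)) :=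
      div_nonneg (mul_nonneg (Real.rpow_nonneg (by norm_num) _) (Real.rpow_nonneg hL.le _))
        (by nlinarith)
    set g : ℝ → ℝ := fun r => (2 + 2*(N (2*r):ℝ)) * r ^ D / ((1-D) * kappa (1-D)) with hg
    have heq : ∀ᶠ r in 𝓝[>] (0:ℝ),
        μH[(0:ℝ)] (frontier (cthickening r F)) /
          ENNReal.ofReal ((1 - D) * kappa (1 - D) * r ^ (-D)) = ENNReal.ofReal (g r) := by
      filter_upwards [self_mem_nhdsWithin] with r hr
      rw [mem_Ioi] at hr
      have hrD : (0:ℝ) < r ^ D := Real.rpow_pos_of_pos hr D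
      have hdenom : 0 < (1 - D) * kappa (1 - D) * r ^ (-D) :=
        mul_pos hc (Real.rpow_pos_of_pos hr _)
      rw [hμ r hr, hg]
      rw [show ((2 + 2 * N (2*r) : ℕ) : ℝ≥0∞) = ENNReal.ofReal ((2 + 2*(N (2*r):ℝ))) by
        rw [← ENNReal.ofReal_natCast]; norm_num]
      rw [← ENNReal.ofReal_div_of_pos hdenom]
      congr 1
      rw [Real.rpow_neg hr.le]
      field_simp
    have hS1 : Tendsto (fun r => ENNReal.ofReal (g r)) (𝓝[>] (0:ℝ))
        (𝓝 (ENNReal.ofReal ((2:ℝ) ^ (1-D) * L ^ D / (kappa (1-D) * (1-D))))) :=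
      hS.congr' heq
    have hS2 := (ENNReal.tendsto_toReal ENNReal.ofReal_ne_top).comp hS1
    rw [ENNReal.toReal_ofReal hA] at hS2
    have hS3 : Tendsto g (𝓝[>] (0:ℝ))
        (𝓝 ((2:ℝ) ^ (1-D) * L ^ D / (kappa (1-D) * (1-D)))) := by
      apply hS2.congr'
      filter_upwards [self_mem_nhdsWithin] with r hr
      rw [mem_Ioi] at hr
      simp only [Function.comp_apply]
      rw [ENNReal.toReal_ofReal]
      rw [hg]
      have hrD : (0:ℝ) ≤ r ^ D := Real.rpow_nonneg hr.le D
      positivity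
    have hS4 := hS3.mul_const ((1-D) * kappa (1-D))
    have hval : (2:ℝ) ^ (1-D) * L ^ D / (kappa (1-D) * (1-D)) * ((1-D) * kappa (1-D))
        = (2:ℝ) ^ (1-D) * L ^ D := by
      rw [mul_comm (kappa (1-D)) (1-D)]
      exact div_mul_cancel₀ _ hc.ne'
    rw [hval] at hS4
    have hS5 : Tendsto (fun r : ℝ => (2 + 2*(N (2*r):ℝ)) * r ^ D) (𝓝[>] (0:ℝ))
        (𝓝 ((2:ℝ) ^ (1-D) * L ^ D)) := by
      apply hS4.congr
      intro r
      exact div_mul_cancel₀ _ hc.ne'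
    have hhalf : Tendsto (fun t : ℝ => t/2) (𝓝[>] (0:ℝ)) (𝓝[>] (0:ℝ)) := by
      apply tendsto_nhdsWithin_of_tendsto_nhds_of_eventually_within
      · have : Tendsto (fun t : ℝ => t/2) (𝓝 (0:ℝ)) (𝓝 ((0:ℝ)/2)) :=
          (continuous_id.div_const 2).tendsto 0
        rw [zero_div] at this
        exact this.mono_left nhdsWithin_le_nhds
      · filter_upwards [self_mem_nhdsWithin] with t ht
        rw [mem_Ioi] at ht ⊢
        linarith
    have h6 := (hS5.comp hhalf).mul_const ((2:ℝ) ^ D / 2)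
    have h2D : (0:ℝ) < (2:ℝ) ^ D := Real.rpow_pos_of_pos (by norm_num) D
    have hval2 : (2:ℝ) ^ (1-D) * L ^ D * ((2:ℝ) ^ D / 2) = L ^ D := by
      have h2 : (2:ℝ) ^ (1-D) * (2:ℝ) ^ D = 2 := by
        rw [← Real.rpow_add (by norm_num)]
        norm_num
      field_simp
      linear_combination h2
    rw [hval2] at h6
    apply h6.congr'
    filter_upwards [self_mem_nhdsWithin] with t ht
    rw [mem_Ioi] at ht
    simp only [Function.comp_apply]
    rw [show 2 * (t/2) = t by ring, Real.div_rpow ht.le (by norm_num)]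
    field_simp
  exact asym_conv hDpos hL hpos (asym_key hDpos hL hpos hl0 hN1 hN2 hlim)
end

section
/- Let (l_j) be a non-increasing sequence of positive reals tending to 0, D∈(0,1), and J(ε)=#{j: l_j ≥ ε}. Suppose there exist 0<m<M and r₀>0 with m ≤ r^D J(r) ≤ M for all 0<r≤r₀. Then m^{1/D} ≤ liminf_j l_j j^{1/D} and limsup_j l_j j^{1/D} ≤ M^{1/D}. -/
open Filter Set Topology

theorem string_bounds_of_counting_bounds (l : ℕ → ℝ) (hl_anti : Antitone l)
    (hl_pos : ∀ j, 0 < l j) (hl_lim : Filter.Tendsto l Filter.atTop (𝓝 0))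
    (D : ℝ) (hD : D ∈ Set.Ioo (0 : ℝ) 1) (m M r₀ : ℝ) (hm : 0 < m) (hmM : m < M)
    (hr₀ : 0 < r₀)
    (hJ : ∀ r : ℝ, 0 < r → r ≤ r₀ →
      m ≤ r ^ D * ({j : ℕ | r ≤ l j}.ncard : ℝ) ∧
        r ^ D * ({j : ℕ | r ≤ l j}.ncard : ℝ) ≤ M) :
    ((m ^ (1 / D) : ℝ) : EReal) ≤
        Filter.liminf (fun j : ℕ => ((l j * (j : ℝ) ^ (1 / D) : ℝ) : EReal)) Filter.atTop ∧
      Filter.limsup (fun j : ℕ => ((l j * (j : ℝ) ^ (1 / D) : ℝ) : EReal)) Filter.atTop ≤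
        ((M ^ (1 / D) : ℝ) : EReal) := by
  obtain ⟨hD0, hD1⟩ := hD
  have hDne : D ≠ 0 := ne_of_gt hD0
  have hM : (0:ℝ) < M := hm.trans hmM
  -- finiteness of the counting sets
  have hfin : ∀ r : ℝ, 0 < r → {j : ℕ | r ≤ l j}.Finite := by
    intro r hr
    obtain ⟨N, hN⟩ := Filter.eventually_atTop.mp (hl_lim.eventually (gt_mem_nhds hr))
    apply (Set.finite_Iio N).subset
    intro j hj
    by_contra h
    exact absurd (hN j (not_lt.mp h)) (not_lt.mpr hj)
  -- lower pointwise bound, eventually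
  have hlow : ∀ᶠ j : ℕ in atTop, m ^ (1/D) ≤ l j * (j : ℝ) ^ (1/D) := by
    have hev : ∀ᶠ j : ℕ in atTop, l j < r₀ := hl_lim.eventually (gt_mem_nhds hr₀)
    filter_upwards [hev, Filter.eventually_ge_atTop 1] with j hjr hj1
    have hjpos : (0:ℝ) < (j:ℝ) := by exact_mod_cast hj1
    have key : m ≤ (l j) ^ D * (j:ℝ) := by
      by_contra hcon
      push_neg at hcon
      have hlt : (l j) ^ D < m / j := (lt_div_iff₀ hjpos).mpr hcon
      set c : ℝ := (m / j) ^ (1/D) with hc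
      have hmj : (0:ℝ) < m / j := div_pos hm hjpos
      have hcD : c ^ D = m / j := by
        rw [hc, ← Real.rpow_mul hmj.le, one_div, inv_mul_cancel₀ hDne, Real.rpow_one]
      have hlj_lt_c : l j < c := by
        by_contra h
        push_neg at h
        have := Real.rpow_le_rpow (le_of_lt (Real.rpow_pos_of_pos hmj _)) h hD0.le
        rw [hcD] at this
        exact absurd (this.trans_lt hlt) (lt_irrefl _)
      set r : ℝ := min ((l j + c)/2) r₀ with hr
      have hljr : l j < r := by
        apply lt_min _ hjr
        linarith
      have hrpos : (0:ℝ) < r := (hl_pos j).trans hljr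
      have hrr₀ : r ≤ r₀ := min_le_right _ _
      have hrc : r < c := by
        rcases min_cases ((l j + c)/2) r₀ with ⟨h1, h2⟩ | ⟨h1, h2⟩
        · rw [hr, h1]; linarith
        · rw [hr, h1]; linarith
      have hcard : ({i : ℕ | r ≤ l i}.ncard : ℝ) ≤ (j:ℝ) := by
        have hsub : {i : ℕ | r ≤ l i} ⊆ Set.Iio j := by
          intro i hi
          simp only [Set.mem_setOf_eq] at hi
          by_contra h
          rw [Set.mem_Iio, not_lt] at h
          exact absurd hi (not_le.mpr ((hl_anti h).trans_lt hljr))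
        have := Set.ncard_le_ncard hsub (Set.finite_Iio j)
        have hIio : (Set.Iio j).ncard = j := by
          rw [← Finset.coe_Iio, Set.ncard_coe_finset, Nat.card_Iio]
        rw [hIio] at this
        exact_mod_cast this
      have h1 := (hJ r hrpos hrr₀).1
      have h2 : r ^ D * ({i : ℕ | r ≤ l i}.ncard : ℝ) ≤ r ^ D * (j:ℝ) :=
        mul_le_mul_of_nonneg_left hcard (Real.rpow_nonneg hrpos.le _)
      have h3 : r ^ D < c ^ D := Real.rpow_lt_rpow hrpos.le hrc hD0
      have h4 : r ^ D * (j:ℝ) < c ^ D * (j:ℝ) := mul_lt_mul_of_pos_right h3 hjpos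
      rw [hcD, div_mul_cancel₀ _ (ne_of_gt hjpos)] at h4
      linarith
    -- from key : m ≤ (l j)^D * j deduce m^(1/D) ≤ l j * j^(1/D)
    have h5 := Real.rpow_le_rpow hm.le key (by positivity : (0:ℝ) ≤ 1/D)
    have h6 : ((l j) ^ D * (j:ℝ)) ^ (1/D) = l j * (j:ℝ) ^ (1/D) := by
      rw [Real.mul_rpow (Real.rpow_nonneg (hl_pos j).le _) hjpos.le,
        ← Real.rpow_mul (hl_pos j).le, mul_one_div, div_self hDne, Real.rpow_one]
    rwa [h6] at h5
  -- upper pointwise bound, eventually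
  have hupp : ∀ᶠ j : ℕ in atTop, l j * (j : ℝ) ^ (1/D) ≤ M ^ (1/D) := by
    have hev : ∀ᶠ j : ℕ in atTop, l j < r₀ := hl_lim.eventually (gt_mem_nhds hr₀)
    filter_upwards [hev] with j hjr
    have hcard : ((j:ℝ) + 1) ≤ ({i : ℕ | l j ≤ l i}.ncard : ℝ) := by
      have hsub : Set.Iic j ⊆ {i : ℕ | l j ≤ l i} := fun i hi => hl_anti hi
      have := Set.ncard_le_ncard hsub (hfin _ (hl_pos j))
      have hIic : (Set.Iic j).ncard = j + 1 := by
        rw [← Finset.coe_Iic, Set.ncard_coe_finset, Nat.card_Iic]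
      rw [hIic] at this
      exact_mod_cast this
    have h1 := (hJ (l j) (hl_pos j) hjr.le).2
    have h2 : (l j) ^ D * ((j:ℝ) + 1) ≤ M :=
      le_trans (mul_le_mul_of_nonneg_left hcard (Real.rpow_nonneg (hl_pos j).le _)) h1
    have hbase : (0:ℝ) ≤ (l j) ^ D * ((j:ℝ)+1) :=
      mul_nonneg (Real.rpow_nonneg (hl_pos j).le _) (by positivity)
    have h5 := Real.rpow_le_rpow hbase h2 (by positivity : (0:ℝ) ≤ 1/D)
    have h6 : ((l j) ^ D * ((j:ℝ)+1)) ^ (1/D) = l j * ((j:ℝ)+1) ^ (1/D) := by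
      rw [Real.mul_rpow (Real.rpow_nonneg (hl_pos j).le _) (by positivity),
        ← Real.rpow_mul (hl_pos j).le, mul_one_div, div_self hDne, Real.rpow_one]
    rw [h6] at h5
    refine le_trans ?_ h5
    exact mul_le_mul_of_nonneg_left
      (Real.rpow_le_rpow (Nat.cast_nonneg j) (by linarith) (by positivity)) (hl_pos j).le
  constructor
  · calc ((m ^ (1/D) : ℝ) : EReal)
        = Filter.liminf (fun _ : ℕ => ((m ^ (1/D) : ℝ) : EReal)) Filter.atTop :=
          (Filter.liminf_const _).symm
      _ ≤ _ := Filter.liminf_le_liminf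
          (hlow.mono fun j hj => EReal.coe_le_coe_iff.mpr hj)
  · calc Filter.limsup (fun j : ℕ => ((l j * (j : ℝ) ^ (1 / D) : ℝ) : EReal)) Filter.atTop
        ≤ Filter.limsup (fun _ : ℕ => ((M ^ (1/D) : ℝ) : EReal)) Filter.atTop :=
          Filter.limsup_le_limsup (hupp.mono fun j hj => EReal.coe_le_coe_iff.mpr hj)
      _ = _ := Filter.limsup_const _
end

section
/- Let f be a Kneser function of order d≥1 and let h(r)=r^s g(r) with s∈(0,∞) and g:(0,∞)→(0,∞) non-decreasing and differentiable with limsup_{r→0} r g'(r)/g(r) < ∞. If 0 < liminf_{r→0} f(r)/h(r) ≤ limsup_{r→0} f(r)/h(r) < ∞, then 0 < liminf_{r→0} f'_+(r)/h'(r) ≤ limsup_{r→0} f'_−(r)/h'(r) < ∞, where h'(r)=r^{s−1}g(r)(s + r g'(r)/g(r)). -/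
open Filter Set Topology

/-- A Kneser function of order `d`. -/
def IsKneser (f : ℝ → ℝ) (d : ℝ) : Prop :=
  (∀ x : ℝ, 0 < x → 0 < f x) ∧
  ∀ a b lam : ℝ, 0 < a → a ≤ b → 1 ≤ lam →
    f (lam * b) - f (lam * a) ≤ lam ^ d * (f b - f a)

section K1

variable {G : ℝ → ℝ}
  (HP : ∀ y : ℝ, 0 < y → 0 < G y)
  (HS : ∀ A B μ : ℝ, 0 < A → A ≤ B → 1 ≤ μ → G (μ * B) - G (μ * A) ≤ μ * (G B - G A))

include HP HS

/-- An order-1 Kneser function is monotone on `(0,∞)`. -/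
theorem k1_mono {A B : ℝ} (hA : 0 < A) (hAB : A ≤ B) : G A ≤ G B := by
  rcases eq_or_lt_of_le hAB with rfl | hlt
  · exact le_rfl
  by_contra hcon
  push_neg at hcon
  set Δ : ℝ := G B - G A with hΔdef
  have hΔ : Δ < 0 := by simp [hΔdef]; linarith
  set ρ : ℝ := B / A with hρdef
  have hρ : 1 < ρ := (one_lt_div hA).2 hlt
  have hAρ : A * ρ = B := by rw [hρdef]; field_simp
  have hB : 0 < B := hA.trans hlt
  have claim1 : ∀ n : ℕ, G (B * ρ ^ n) - G (A * ρ ^ n) ≤ Δ := by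
    intro n; induction n with
    | zero => simp [hΔdef]
    | succ n ih =>
      have h1 := HS (A * ρ ^ n) (B * ρ ^ n) ρ
        (by positivity) (by nlinarith [pow_pos (lt_trans one_pos hρ) n]) hρ.le
      have e1 : ρ * (B * ρ ^ n) = B * ρ ^ (n + 1) := by ring
      have e2 : ρ * (A * ρ ^ n) = A * ρ ^ (n + 1) := by ring
      rw [e1, e2] at h1
      nlinarith
  have claim2 : ∀ n : ℕ, G (B * ρ ^ n) ≤ G B + n * Δ := by
    intro n; induction n with
    | zero => simp
    | succ n ih =>
      have key : A * ρ ^ (n + 1) = B * ρ ^ n := by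
        rw [pow_succ]; rw [← hAρ]; ring
      have h1 := claim1 (n + 1)
      rw [key] at h1
      push_cast
      nlinarith
  obtain ⟨n, hn⟩ := exists_nat_gt (G B / (-Δ))
  have h2 := claim2 n
  have h3 : 0 < G (B * ρ ^ n) := HP _ (by positivity)
  have h4 : G B < n * (-Δ) := by
    rwa [div_lt_iff₀ (by linarith)] at hn
  nlinarith

end K1

section K1b

variable {G : ℝ → ℝ}
  (HP : ∀ y : ℝ, 0 < y → 0 < G y)
  (HS : ∀ A B μ : ℝ, 0 < A → A ≤ B → 1 ≤ μ → G (μ * B) - G (μ * A) ≤ μ * (G B - G A))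

include HP HS

/-- Upper growth bound: `A * G B ≤ B * G A` for `0 < A ≤ B`. -/
theorem k1_upper {A B : ℝ} (hA : 0 < A) (hAB : A ≤ B) : A * G B ≤ B * G A := by
  rcases eq_or_lt_of_le hAB with rfl | hlt
  · exact le_rfl
  have hB : 0 < B := hA.trans hlt
  set q : ℝ := A / B with hqdef
  have hq0 : 0 < q := by positivity
  have hq1 : q < 1 := (div_lt_one hB).2 hlt
  set Δ : ℝ := G B - G A with hΔdef
  have hΔ0 : 0 ≤ Δ := by
    have := k1_mono HP HS hA hAB; simp [hΔdef]; linarith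
  -- single-step inequality
  have step : ∀ k : ℕ, q ^ (k + 1) * Δ ≤ G (A * q ^ k) - G (A * q ^ (k + 1)) := by
    intro k
    have hρk : (1 : ℝ) ≤ (q ^ (k + 1))⁻¹ := by
      rw [le_inv_comm₀ one_pos (by positivity)]
      simpa using pow_le_one₀ hq0.le hq1.le
    have h1 := HS (A * q ^ (k + 1)) (A * q ^ k) ((q ^ (k + 1))⁻¹)
      (by positivity)
      (by
        have : q ^ (k + 1) ≤ q ^ k := pow_le_pow_of_le_one hq0.le hq1.le (Nat.le_succ k)
        nlinarith)
      hρk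
    have e1 : (q ^ (k + 1))⁻¹ * (A * q ^ k) = B := by
      rw [hqdef]; field_simp; rw [pow_succ]; field_simp
    have e2 : (q ^ (k + 1))⁻¹ * (A * q ^ (k + 1)) = A := by
      field_simp
    rw [e1, e2] at h1
    have hqk : (0:ℝ) < q ^ (k+1) := by positivity
    have h2 := mul_le_mul_of_nonneg_left h1 hqk.le
    rw [← mul_assoc, mul_inv_cancel₀ hqk.ne', one_mul] at h2
    exact h2
  -- telescoping
  have tele : ∀ n : ℕ, Δ * ∑ k ∈ Finset.range n, q ^ (k + 1) ≤ G A - G (A * q ^ n) := by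
    intro n; induction n with
    | zero => simp
    | succ n ih =>
      rw [Finset.sum_range_succ]
      have := step n
      nlinarith
  have bound : ∀ n : ℕ, Δ * ∑ k ∈ Finset.range n, q ^ (k + 1) ≤ G A := by
    intro n
    have h1 := tele n
    have h2 : 0 < G (A * q ^ n) := HP _ (by positivity)
    linarith
  -- pass to the limit
  have hsum : Tendsto (fun n : ℕ => Δ * ∑ k ∈ Finset.range n, q ^ (k + 1)) atTop
      (𝓝 (Δ * (q * (1 - q)⁻¹))) := by
    have h := (hasSum_geometric_of_lt_one hq0.le hq1).tendsto_sum_nat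
    have h2 : Tendsto (fun n : ℕ => ∑ k ∈ Finset.range n, q ^ (k + 1)) atTop
        (𝓝 (q * (1 - q)⁻¹)) := by
      have : ∀ n : ℕ, ∑ k ∈ Finset.range n, q ^ (k + 1) = q * ∑ k ∈ Finset.range n, q ^ k := by
        intro n; rw [Finset.mul_sum]; exact Finset.sum_congr rfl fun k _ => by ring
      simp only [this]
      exact (h.const_mul q)
    exact h2.const_mul Δ
  have hlim : Δ * (q * (1 - q)⁻¹) ≤ G A := le_of_tendsto' hsum bound
  -- rearrange
  have hBA : (0:ℝ) < B - A := by linarith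
  have key : q * (1 - q)⁻¹ * (B - A) = A := by
    rw [hqdef, show (1 - A/B) = (B-A)/B by field_simp, inv_div]
    field_simp
  have h5 := mul_le_mul_of_nonneg_right hlim hBA.le
  rw [mul_assoc, key] at h5
  nlinarith

end K1b

section K1c

variable {G : ℝ → ℝ}
  (HP : ∀ y : ℝ, 0 < y → 0 < G y)
  (HS : ∀ A B μ : ℝ, 0 < A → A ≤ B → 1 ≤ μ → G (μ * B) - G (μ * A) ≤ μ * (G B - G A))

include HP HS

theorem k1_cont {x : ℝ} (hx : 0 < x) : ContinuousAt G x := by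
  have hlb : ∀ y : ℝ, 0 < y → min (G x * (y / x)) (G x) ≤ G y := by
    intro y hy
    rcases le_total y x with h | h
    · refine le_trans (min_le_left _ _) ?_
      have := k1_upper HP HS hy h
      rw [mul_div_assoc']
      rw [div_le_iff₀ hx]
      nlinarith
    · exact le_trans (min_le_right _ _) (k1_mono HP HS hx h)
  have hub : ∀ y : ℝ, 0 < y → G y ≤ max (G x * (y / x)) (G x) := by
    intro y hy
    rcases le_total y x with h | h
    · exact le_trans (k1_mono HP HS hy h) (le_max_right _ _)
    · refine le_trans ?_ (le_max_left _ _)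
      have := k1_upper HP HS hx h
      rw [mul_div_assoc', le_div_iff₀ hx]
      nlinarith
  have hev : ∀ᶠ y in 𝓝 x, 0 < y := eventually_gt_nhds hx
  have hcont : Tendsto (fun y : ℝ => G x * (y / x)) (𝓝 x) (𝓝 (G x)) := by
    have : Tendsto (fun y : ℝ => G x * (y / x)) (𝓝 x) (𝓝 (G x * (x / x))) :=
      (tendsto_id.div_const x).const_mul (G x)
    rwa [div_self hx.ne', mul_one] at this
  have hmin : Tendsto (fun y : ℝ => min (G x * (y / x)) (G x)) (𝓝 x) (𝓝 (G x)) := by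
    have := hcont.min (tendsto_const_nhds : Tendsto (fun _ : ℝ => G x) (𝓝 x) (𝓝 (G x)))
    rwa [min_self] at this
  have hmax : Tendsto (fun y : ℝ => max (G x * (y / x)) (G x)) (𝓝 x) (𝓝 (G x)) := by
    have := hcont.max (tendsto_const_nhds : Tendsto (fun _ : ℝ => G x) (𝓝 x) (𝓝 (G x)))
    rwa [max_self] at this
  exact tendsto_of_tendsto_of_tendsto_of_le_of_le' hmin hmax
    (hev.mono fun y hy => hlb y hy) (hev.mono fun y hy => hub y hy)

end K1c

section K1d

theorem k1_pieces_le (G : ℝ → ℝ) (C ρ M : ℝ) (p : ℕ)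
    (h : ∀ k < p, G (C * ρ ^ (k + 1)) - G (C * ρ ^ k) ≤ M * (C * ρ ^ (k + 1) - C * ρ ^ k)) :
    G (C * ρ ^ p) - G C ≤ M * (C * ρ ^ p - C) := by
  induction p with
  | zero => simp
  | succ p ih =>
    have h1 := h p (Nat.lt_succ_self p)
    have h2 := ih fun k hk => h k (hk.trans (Nat.lt_succ_self p))
    have e : M * (C * ρ ^ (p + 1) - C) =
        M * (C * ρ ^ (p + 1) - C * ρ ^ p) + M * (C * ρ ^ p - C) := by ring
    rw [e]; simp at h2 ⊢; linarith

theorem k1_pieces_ge (G : ℝ → ℝ) (C ρ M : ℝ) (p : ℕ)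
    (h : ∀ k < p, M * (C * ρ ^ (k + 1) - C * ρ ^ k) ≤ G (C * ρ ^ (k + 1)) - G (C * ρ ^ k)) :
    M * (C * ρ ^ p - C) ≤ G (C * ρ ^ p) - G C := by
  induction p with
  | zero => simp
  | succ p ih =>
    have h1 := h p (Nat.lt_succ_self p)
    have h2 := ih fun k hk => h k (hk.trans (Nat.lt_succ_self p))
    have e : M * (C * ρ ^ (p + 1) - C) =
        M * (C * ρ ^ (p + 1) - C * ρ ^ p) + M * (C * ρ ^ p - C) := by ring
    rw [e]; simp at h2 ⊢; linarith

variable {G : ℝ → ℝ}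
  (HS : ∀ A B μ : ℝ, 0 < A → A ≤ B → 1 ≤ μ → G (μ * B) - G (μ * A) ≤ μ * (G B - G A))

include HS

theorem k1_commensurable {A ρ C : ℝ} (hA : 0 < A) (hρ : 1 < ρ) (p m : ℕ) (hp : 0 < p)
    (hC : A * ρ ^ (m + 1) ≤ C) :
    (G (C * ρ ^ p) - G C) * (A * ρ ^ (m + 1) - A) ≤
      (G (A * ρ ^ (m + 1)) - G A) * (C * ρ ^ p - C) := by
  have hρ0 : 0 < ρ := lt_trans one_pos hρ
  have hC0 : 0 < C := lt_of_lt_of_le (by positivity) hC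
  have hρm : (1:ℝ) < ρ ^ (m + 1) := one_lt_pow₀ hρ (Nat.succ_ne_zero m)
  have hρp : (1:ℝ) < ρ ^ p := one_lt_pow₀ hρ hp.ne'
  set lenL : ℝ := A * ρ ^ (m + 1) - A * ρ ^ m with hlenL
  have hlenL0 : 0 < lenL := by
    have : (ρ:ℝ) ^ m < ρ ^ (m + 1) := by
      rw [pow_succ]; nlinarith [pow_pos hρ0 m]
    nlinarith
  set ΔL : ℝ := G (A * ρ ^ (m + 1)) - G (A * ρ ^ m) with hΔL
  set σL : ℝ := ΔL / lenL with hσL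
  -- (a) upper bound for the C-pieces
  have ha : ∀ k < p, G (C * ρ ^ (k + 1)) - G (C * ρ ^ k) ≤ σL * (C * ρ ^ (k + 1) - C * ρ ^ k) := by
    intro k _
    set μ : ℝ := C * ρ ^ k / (A * ρ ^ m) with hμ
    have hAρm : (0:ℝ) < A * ρ ^ m := by positivity
    have hμ1 : 1 ≤ μ := by
      rw [hμ, le_div_iff₀ hAρm]
      have h1 : C ≤ C * ρ ^ k := le_mul_of_one_le_right hC0.le (one_le_pow₀ hρ.le)
      have h2 : A * ρ ^ m ≤ A * ρ ^ (m + 1) := by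
        rw [pow_succ]; nlinarith [pow_pos hρ0 m]
      linarith
    have key := HS (A * ρ ^ m) (A * ρ ^ (m + 1)) μ hAρm
      (by rw [pow_succ]; nlinarith [pow_pos hρ0 m]) hμ1
    have e1 : μ * (A * ρ ^ m) = C * ρ ^ k := by
      rw [hμ]; field_simp
    have e2 : μ * (A * ρ ^ (m + 1)) = C * ρ ^ (k + 1) := by
      rw [hμ, pow_succ, pow_succ]; field_simp
    rw [e1, e2] at key
    have e3 : C * ρ ^ (k + 1) - C * ρ ^ k = μ * lenL := by
      rw [← e1, ← e2, hlenL]; ring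
    rw [e3, hσL]
    calc G (C * ρ ^ (k + 1)) - G (C * ρ ^ k) ≤ μ * ΔL := key
      _ = ΔL / lenL * (μ * lenL) := by field_simp
  -- (b) lower bound for the A-pieces
  have hb : ∀ k < m + 1, σL * (A * ρ ^ (k + 1) - A * ρ ^ k) ≤
      G (A * ρ ^ (k + 1)) - G (A * ρ ^ k) := by
    intro k hk
    have hkm : k ≤ m := Nat.lt_succ_iff.1 hk
    set μ : ℝ := ρ ^ (m - k) with hμ
    have hμ1 : 1 ≤ μ := one_le_pow₀ hρ.le
    have hμ0 : 0 < μ := by positivity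
    have epow : μ * ρ ^ k = ρ ^ m := by
      rw [hμ, ← pow_add, Nat.sub_add_cancel hkm]
    have key := HS (A * ρ ^ k) (A * ρ ^ (k + 1)) μ (by positivity)
      (by rw [pow_succ, ← mul_assoc]
          exact le_mul_of_one_le_right (by positivity) hρ.le) hμ1
    have e1 : μ * (A * ρ ^ k) = A * ρ ^ m := by
      rw [show μ * (A * ρ ^ k) = A * (μ * ρ ^ k) by ring, epow]
    have e2 : μ * (A * ρ ^ (k + 1)) = A * ρ ^ (m + 1) := by
      rw [pow_succ, pow_succ, show μ * (A * (ρ ^ k * ρ)) = A * (μ * ρ ^ k) * ρ by ring, epow]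
      ring
    rw [e1, e2] at key
    have e3 : lenL = μ * (A * ρ ^ (k + 1) - A * ρ ^ k) := by
      rw [hlenL, ← e1, ← e2]; ring
    have hlenk : (0:ℝ) < A * ρ ^ (k + 1) - A * ρ ^ k := by
      have : A * ρ ^ k < A * ρ ^ (k + 1) := by
        rw [pow_succ, ← mul_assoc]
        exact lt_mul_of_one_lt_right (by positivity) hρ
      linarith
    rw [hσL, e3, div_mul_eq_mul_div, div_le_iff₀ (by positivity)]
    nlinarith [mul_le_mul_of_nonneg_right key hlenk.le]
  -- combine
  have hXa := k1_pieces_le G C ρ σL p ha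
  have hXb := k1_pieces_ge G A ρ σL (m + 1) hb
  have hLC : (0:ℝ) < C * ρ ^ p - C := by nlinarith
  have hLA : (0:ℝ) < A * ρ ^ (m + 1) - A := by nlinarith
  nlinarith [mul_le_mul_of_nonneg_right hXa hLA.le, mul_le_mul_of_nonneg_right hXb hLC.le]

end K1d

section K1e

variable {G : ℝ → ℝ}
  (HP : ∀ y : ℝ, 0 < y → 0 < G y)
  (HS : ∀ A B μ : ℝ, 0 < A → A ≤ B → 1 ≤ μ → G (μ * B) - G (μ * A) ≤ μ * (G B - G A))

include HP HS

theorem k1_slope_comp {A B C D : ℝ} (hA : 0 < A) (hAB : A < B) (hBC : B ≤ C) (hCD : C < D) :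
    (G D - G C) * (B - A) ≤ (G B - G A) * (D - C) := by
  have hB : 0 < B := hA.trans hAB
  have hC : 0 < C := lt_of_lt_of_le hB hBC
  have hD : 0 < D := hC.trans hCD
  have hba : (1:ℝ) < B / A := (one_lt_div hA).2 hAB
  have hdc : (1:ℝ) < D / C := (one_lt_div hC).2 hCD
  have hbapos0 : (0:ℝ) < B / A := by positivity
  -- rational exponent case
  have claim_rat : ∀ t : ℚ, 0 < t →
      (G (C * (B / A) ^ (t : ℝ)) - G C) * (B - A) ≤
        (G B - G A) * (C * (B / A) ^ (t : ℝ) - C) := by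
    intro t ht
    obtain ⟨m, hm⟩ : ∃ m : ℕ, t.den = m + 1 :=
      Nat.exists_eq_succ_of_ne_zero t.den_nz
    set p : ℕ := t.num.toNat with hp
    have hp0 : 0 < p := by
      have : 0 < t.num := Rat.num_pos.2 ht
      omega
    set ρ : ℝ := (B / A) ^ ((t.den : ℝ))⁻¹ with hρdef
    have hbapos : (0:ℝ) < B / A := by positivity
    have hρ : 1 < ρ := by
      rw [hρdef]
      exact Real.one_lt_rpow_iff_of_pos hbapos |>.2 (Or.inl ⟨hba, by positivity⟩)
    have hρpow : ∀ n : ℕ, (ρ : ℝ) ^ n = (B / A) ^ ((n : ℝ) / t.den) := by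
      intro n
      rw [hρdef, ← Real.rpow_natCast ((B / A) ^ ((t.den : ℝ))⁻¹) n, ← Real.rpow_mul hbapos.le]
      congr 1
      field_simp
    have hAB' : A * ρ ^ (m + 1) = B := by
      rw [← hm, hρpow, div_self (by positivity : (t.den:ℝ) ≠ 0), Real.rpow_one]
      field_simp
    have hCp : C * ρ ^ p = C * (B / A) ^ (t : ℝ) := by
      rw [hρpow]
      congr 2
      rw [Rat.cast_def]
      congr 1
      have hnum : (t.num.toNat : ℤ) = t.num := Int.toNat_of_nonneg (Rat.num_pos.2 ht).le
      exact_mod_cast congrArg (fun z : ℤ => (z : ℝ)) hnum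
    have hkey := k1_commensurable HS (A := A) (ρ := ρ) (C := C) hA hρ p m hp0
      (le_trans (le_of_eq hAB') hBC)
    rw [hAB', hCp] at hkey
    exact hkey
  -- pass to real exponents by continuity
  set t₀ : ℝ := Real.log (D / C) / Real.log (B / A) with ht₀
  have hlogba : 0 < Real.log (B / A) := Real.log_pos hba
  have hlogdc : 0 < Real.log (D / C) := Real.log_pos hdc
  have ht₀pos : 0 < t₀ := div_pos hlogdc hlogba
  have hDt : C * (B / A) ^ t₀ = D := by
    have hlt : Real.log (B / A) * t₀ = Real.log (D / C) := by
      rw [ht₀]; field_simp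
    rw [Real.rpow_def_of_pos hbapos0, hlt, Real.exp_log (by positivity)]
    field_simp
  -- choose rationals decreasing to t₀
  have hseq : ∀ n : ℕ, ∃ q : ℚ, t₀ < (q : ℝ) ∧ (q : ℝ) < t₀ + 1 / (n + 1) := by
    intro n
    exact exists_rat_btwn (lt_add_of_pos_right t₀ (by positivity))
  choose qs hq1 hq2 using hseq
  have hqpos : ∀ n, 0 < qs n := by
    intro n
    have h := ht₀pos.trans (hq1 n)
    exact_mod_cast h
  have hqt : Tendsto (fun n : ℕ => ((qs n : ℝ))) atTop (𝓝 t₀) := by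
    have hub : Tendsto (fun n : ℕ => t₀ + 1 / (n + 1)) atTop (𝓝 (t₀ + 0)) :=
      tendsto_const_nhds.add tendsto_one_div_add_atTop_nhds_zero_nat
    rw [add_zero] at hub
    exact tendsto_of_tendsto_of_tendsto_of_le_of_le tendsto_const_nhds hub
      (fun n => (hq1 n).le) (fun n => (hq2 n).le)
  have hFt : Tendsto (fun n : ℕ => C * (B / A) ^ ((qs n : ℝ))) atTop (𝓝 D) := by
    have hcont : Continuous (fun u : ℝ => C * (B / A) ^ u) := by
      have : (fun u : ℝ => C * (B / A) ^ u) =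
          fun u : ℝ => C * Real.exp (Real.log (B / A) * u) := by
        funext u; rw [Real.rpow_def_of_pos hbapos0]
      rw [this]
      exact continuous_const.mul (Real.continuous_exp.comp (continuous_const.mul continuous_id))
    have := (hcont.tendsto t₀).comp hqt
    simpa [hDt, Function.comp_def] using this
  have hGFt : Tendsto (fun n : ℕ => G (C * (B / A) ^ ((qs n : ℝ)))) atTop (𝓝 (G D)) :=
    (k1_cont HP HS hD).tendsto.comp hFt
  refine le_of_tendsto_of_tendsto'
    (f := fun n : ℕ => (G (C * (B / A) ^ ((qs n : ℝ))) - G C) * (B - A))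
    (g := fun n : ℕ => (G B - G A) * (C * (B / A) ^ ((qs n : ℝ)) - C))
    (((hGFt.sub tendsto_const_nhds).mul tendsto_const_nhds))
    ((tendsto_const_nhds.mul (hFt.sub tendsto_const_nhds)))
    (fun n => claim_rat (qs n) (hqpos n))

end K1e

section K1f

variable {G : ℝ → ℝ}
  (HP : ∀ y : ℝ, 0 < y → 0 < G y)
  (HS : ∀ A B μ : ℝ, 0 < A → A ≤ B → 1 ≤ μ → G (μ * B) - G (μ * A) ≤ μ * (G B - G A))

include HP HS

theorem k1_concave : ConcaveOn ℝ (Ioi 0) G := by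
  refine concaveOn_of_slope_anti_adjacent (convex_Ioi 0) ?_
  intro x y z hx hz hxy hyz
  have h := k1_slope_comp HP HS (mem_Ioi.1 hx) hxy le_rfl hyz
  rw [div_le_div_iff₀ (by linarith) (by linarith)]
  nlinarith

theorem k1_deriv {x : ℝ} (hx : 0 < x) :
    ∃ Lp Lm : ℝ, HasDerivWithinAt G Lp (Ioi x) x ∧ HasDerivWithinAt G Lm (Iio x) x ∧
      Lp ≤ Lm ∧ (∀ z, x < z → (G z - G x) / (z - x) ≤ Lp) ∧
      (∀ w, 0 < w → w < x → Lm ≤ (G x - G w) / (x - w)) := by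
  have hconc := k1_concave HP HS
  have hcv : ConvexOn ℝ (Ioi 0) (-G) := hconc.neg
  set slp : ℝ → ℝ := fun y => (G y - G x) / (y - x) with hslp
  have hsec : ∀ u v : ℝ, 0 < u → 0 < v → u ≠ x → v ≠ x → u ≤ v → slp v ≤ slp u := by
    intro u v hu hv hune hvne huv
    have h := hcv.secant_mono (a := x) (mem_Ioi.2 hx) (mem_Ioi.2 hu) (mem_Ioi.2 hv) hune hvne huv
    simp only [Pi.neg_apply] at h
    have eu : (-G u - -G x) / (u - x) = -slp u := by rw [hslp]; rw [← neg_div]; ring_nf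
    have ev : (-G v - -G x) / (v - x) = -slp v := by rw [hslp]; rw [← neg_div]; ring_nf
    rw [eu, ev] at h
    linarith
  -- the right derivative
  have hne1 : (Ioo x (x + 1)).Nonempty := ⟨x + 2⁻¹, by constructor <;> norm_num⟩
  have hanti1 : AntitoneOn slp (Ioo x (x + 1)) := by
    intro u hu v hv huv
    exact hsec u v (hx.trans hu.1) (hx.trans hv.1) hu.1.ne' hv.1.ne' huv
  have hbdd1 : BddAbove (slp '' Ioo x (x + 1)) := by
    refine ⟨slp (x / 2), ?_⟩
    rintro _ ⟨z, hz, rfl⟩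
    exact hsec (x / 2) z (by linarith) (hx.trans hz.1) (by linarith [hz.1]; ) hz.1.ne'
      (by linarith [hz.1])
  set Lp : ℝ := sSup (slp '' Ioo x (x + 1)) with hLp
  have hTp : Tendsto slp (𝓝[>] x) (𝓝 Lp) :=
    AntitoneOn.tendsto_nhdsWithin_Ioo_right hne1 hanti1 hbdd1
  have hDp : HasDerivWithinAt G Lp (Ioi x) x := by
    rw [hasDerivWithinAt_iff_tendsto_slope' (by simp : x ∉ Ioi x)]
    refine hTp.congr' ?_
    filter_upwards [self_mem_nhdsWithin] with y _
    rw [slope_def_field]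
  have hboundp : ∀ z, x < z → slp z ≤ Lp := by
    intro z hz
    rcases lt_or_ge z (x + 1) with h | h
    · exact le_csSup hbdd1 ⟨z, ⟨hz, h⟩, rfl⟩
    · have h1 : slp z ≤ slp (x + 2⁻¹) :=
        hsec (x + 2⁻¹) z (by linarith) (hx.trans hz) (by norm_num) hz.ne' (by linarith)
      exact h1.trans (le_csSup hbdd1 ⟨x + 2⁻¹, ⟨by norm_num, by norm_num⟩, rfl⟩)
  -- the left derivative
  have hne2 : (Ioo (x / 2) x).Nonempty := ⟨3 * x / 4, by constructor <;> linarith⟩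
  have hanti2 : AntitoneOn slp (Ioo (x / 2) x) := by
    intro u hu v hv huv
    exact hsec u v (by linarith [hu.1]) (by linarith [hv.1]) hu.2.ne hv.2.ne huv
  have hbdd2 : BddBelow (slp '' Ioo (x / 2) x) := by
    refine ⟨slp (x + 1), ?_⟩
    rintro _ ⟨w, hw, rfl⟩
    exact hsec w (x + 1) (by linarith [hw.1]) (by linarith) hw.2.ne (by linarith)
      (by linarith [hw.2])
  set Lm : ℝ := sInf (slp '' Ioo (x / 2) x) with hLm
  have hTm : Tendsto slp (𝓝[<] x) (𝓝 Lm) :=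
    AntitoneOn.tendsto_nhdsWithin_Ioo_left hne2 hanti2 hbdd2
  have hDm : HasDerivWithinAt G Lm (Iio x) x := by
    rw [hasDerivWithinAt_iff_tendsto_slope' (by simp : x ∉ Iio x)]
    refine hTm.congr' ?_
    filter_upwards [self_mem_nhdsWithin] with y _
    rw [slope_def_field]
  have hboundm : ∀ w, 0 < w → w < x → Lm ≤ slp w := by
    intro w hw hwx
    rcases lt_or_ge (x / 2) w with h | h
    · exact csInf_le hbdd2 ⟨w, ⟨h, hwx⟩, rfl⟩
    · have h1 : slp (3 * x / 4) ≤ slp w :=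
        hsec w (3 * x / 4) hw (by linarith) hwx.ne (by linarith) (by linarith)
      exact (csInf_le hbdd2 ⟨3 * x / 4, ⟨by linarith, by linarith⟩, rfl⟩).trans h1
  have hLpLm : Lp ≤ Lm := by
    refine csSup_le (hne1.image _) ?_
    rintro _ ⟨z, hz, rfl⟩
    refine le_csInf (hne2.image _) ?_
    rintro _ ⟨w, hw, rfl⟩
    exact hsec w z (by linarith [hw.1]) (hx.trans hz.1) hw.2.ne hz.1.ne' (by linarith [hw.2, hz.1])
  refine ⟨Lp, Lm, hDp, hDm, hLpLm, hboundp, ?_⟩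
  intro w hw hwx
  have := hboundm w hw hwx
  have e : slp w = (G x - G w) / (x - w) := by
    rw [hslp, div_eq_div_iff (by linarith) (by linarith)]
    ring
  linarith [e ▸ this]

end K1f

section Kd

theorem kneser_one_sided (f : ℝ → ℝ) (d : ℝ) (hd : 1 ≤ d) (hf : IsKneser f d) {r : ℝ}
    (hr : 0 < r) :
    ∃ P Q : ℝ,
      HasDerivWithinAt f P (Ioi r) r ∧ HasDerivWithinAt f Q (Iio r) r ∧ P ≤ Q ∧
      (∀ R, r < R → (f R - f r) / (R ^ d - r ^ d) * (d * r ^ (d - 1)) ≤ P) ∧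
      (∀ w, 0 < w → w < r → Q ≤ (f r - f w) / (r ^ d - w ^ d) * (d * r ^ (d - 1))) := by
  have hd0 : (0:ℝ) < d := lt_of_lt_of_le one_pos hd
  have hdne : d ≠ 0 := hd0.ne'
  set G : ℝ → ℝ := fun y => f (y ^ d⁻¹) with hG
  have HP : ∀ y : ℝ, 0 < y → 0 < G y := fun y hy =>
    hf.1 _ (Real.rpow_pos_of_pos hy _)
  have HS : ∀ A B μ : ℝ, 0 < A → A ≤ B → 1 ≤ μ → G (μ * B) - G (μ * A) ≤ μ * (G B - G A) := by
    intro A B μ hA hAB hμ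
    have hμ0 : (0:ℝ) < μ := lt_of_lt_of_le one_pos hμ
    have hμd : (1:ℝ) ≤ μ ^ d⁻¹ := by
      have := Real.rpow_le_rpow zero_le_one hμ (by positivity : (0:ℝ) ≤ d⁻¹)
      rwa [Real.one_rpow] at this
    have h := hf.2 (A ^ d⁻¹) (B ^ d⁻¹) (μ ^ d⁻¹) (Real.rpow_pos_of_pos hA _)
      (Real.rpow_le_rpow hA.le hAB (by positivity)) hμd
    have e1 : μ ^ d⁻¹ * B ^ d⁻¹ = (μ * B) ^ d⁻¹ := (Real.mul_rpow hμ0.le (by linarith)).symm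
    have e2 : μ ^ d⁻¹ * A ^ d⁻¹ = (μ * A) ^ d⁻¹ := (Real.mul_rpow hμ0.le hA.le).symm
    have e3 : (μ ^ d⁻¹) ^ d = μ := by
      rw [← Real.rpow_mul hμ0.le, inv_mul_cancel₀ hdne, Real.rpow_one]
    rw [e1, e2, e3] at h
    exact h
  have hrd : (0:ℝ) < r ^ d := Real.rpow_pos_of_pos hr _
  obtain ⟨Lp, Lm, hDp, hDm, hle, hbp, hbm⟩ := k1_deriv HP HS hrd
  have hfG : ∀ x : ℝ, 0 < x → f x = G (x ^ d) := by
    intro x hx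
    rw [hG]
    simp only
    rw [← Real.rpow_mul hx.le, mul_inv_cancel₀ hdne, Real.rpow_one]
  have hΦ : HasDerivAt (fun x : ℝ => x ^ d) (d * r ^ (d - 1)) r :=
    Real.hasDerivAt_rpow_const (Or.inl hr.ne')
  have hdr : (0:ℝ) ≤ d * r ^ (d - 1) := by
    have := Real.rpow_pos_of_pos hr (d - 1); positivity
  -- right derivative of f
  have hmaps1 : MapsTo (fun x : ℝ => x ^ d) (Ioi r) (Ioi (r ^ d)) := fun x hx =>
    mem_Ioi.2 (Real.rpow_lt_rpow hr.le (mem_Ioi.1 hx) hd0)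
  have hcomp1 : HasDerivWithinAt (G ∘ fun x : ℝ => x ^ d) (Lp * (d * r ^ (d - 1))) (Ioi r) r :=
    HasDerivWithinAt.comp r hDp (hΦ.hasDerivWithinAt) hmaps1
  have hP : HasDerivWithinAt f (Lp * (d * r ^ (d - 1))) (Ioi r) r :=
    hcomp1.congr (fun y hy => hfG y (hr.trans (mem_Ioi.1 hy))) (hfG r hr)
  -- left derivative of f
  have hmaps2 : MapsTo (fun x : ℝ => x ^ d) (Ioo 0 r) (Iio (r ^ d)) := fun x hx =>
    mem_Iio.2 (Real.rpow_lt_rpow hx.1.le hx.2 hd0)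
  have hcomp2 : HasDerivWithinAt (G ∘ fun x : ℝ => x ^ d) (Lm * (d * r ^ (d - 1))) (Ioo 0 r) r :=
    HasDerivWithinAt.comp r hDm (hΦ.hasDerivWithinAt) hmaps2
  have hQ0 : HasDerivWithinAt f (Lm * (d * r ^ (d - 1))) (Ioo 0 r) r :=
    hcomp2.congr (fun y hy => hfG y hy.1) (hfG r hr)
  have hmem : Ioo (0:ℝ) r ∈ 𝓝[Iio r] r := by
    rw [mem_nhdsWithin]
    exact ⟨Ioi 0, isOpen_Ioi, hr, fun x hx => ⟨hx.1, hx.2⟩⟩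
  have hQ : HasDerivWithinAt f (Lm * (d * r ^ (d - 1))) (Iio r) r :=
    hQ0.mono_of_mem_nhdsWithin hmem
  refine ⟨_, _, hP, hQ, mul_le_mul_of_nonneg_right hle hdr, ?_, ?_⟩
  · intro R hR
    have h1 := hbp (R ^ d) (Real.rpow_lt_rpow hr.le hR hd0)
    rw [← hfG R (hr.trans hR), ← hfG r hr] at h1
    exact mul_le_mul_of_nonneg_right h1 hdr
  · intro w hw hwr
    have h1 := hbm (w ^ d) (Real.rpow_pos_of_pos hw _) (Real.rpow_lt_rpow hw.le hwr hd0)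
    rw [← hfG w hw, ← hfG r hr] at h1
    exact mul_le_mul_of_nonneg_right h1 hdr

end Kd

section Pointwise

/-- The pointwise estimate at a fixed radius `r`. -/
theorem pointwise_bound (f g : ℝ → ℝ) (d s c Cu M K r : ℝ)
    (hd : 1 ≤ d) (hf : IsKneser f d) (hs : 0 < s) (hr : 0 < r)
    (hgr : 0 < g r) (hgKr : g r ≤ g (K * r)) (hgdnn : 0 ≤ deriv g r)
    (hc0 : 0 < c) (hCu0 : 0 < Cu) (hK1 : 1 < K)
    (hKs : 2 * Cu ≤ c * K ^ s)
    (hfpos : ∀ x : ℝ, 0 < x → 0 < f x)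
    (hc : c < f r / (r ^ s * g r))
    (hC : f r / (r ^ s * g r) < Cu)
    (hM : r * deriv g r / g r < M)
    (hcK : c < f (K * r) / ((K * r) ^ s * g (K * r))) :
    Cu * d / ((K ^ d - 1) * (s + M)) ≤
        derivWithin f (Set.Ioi r) r / (r ^ (s - 1) * g r * (s + r * deriv g r / g r)) ∧
      derivWithin f (Set.Ioi r) r / (r ^ (s - 1) * g r * (s + r * deriv g r / g r)) ≤
        derivWithin f (Set.Iio r) r / (r ^ (s - 1) * g r * (s + r * deriv g r / g r)) ∧
      derivWithin f (Set.Iio r) r / (r ^ (s - 1) * g r * (s + r * deriv g r / g r)) ≤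
        Cu * d / ((1 - ((2:ℝ) ^ d)⁻¹) * s) := by
  have hd0 : (0:ℝ) < d := lt_of_lt_of_le one_pos hd
  have hK0 : (0:ℝ) < K := lt_trans one_pos hK1
  have hKd : (1:ℝ) < K ^ d := by
    have h := (Real.rpow_lt_rpow_left_iff (x := K) hK1).2 hd0
    rwa [Real.rpow_zero] at h
  have hX : (0:ℝ) < K ^ d - 1 := by linarith
  have hβ2 : (2:ℝ) ≤ (2:ℝ) ^ d := by
    have h := (Real.rpow_le_rpow_left_iff (x := (2:ℝ)) one_lt_two).2 hd
    rwa [Real.rpow_one] at h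
  have hγ0 : (0:ℝ) < 1 - ((2:ℝ) ^ d)⁻¹ := by
    have h1 : ((2:ℝ) ^ d)⁻¹ ≤ 2⁻¹ := by
      apply inv_anti₀ (by norm_num) hβ2
    norm_num at h1 ⊢
    linarith
  have hM0 : 0 ≤ M := le_trans (div_nonneg (mul_nonneg hr.le hgdnn) hgr.le) hM.le
  have hsM : (0:ℝ) < s + M := by linarith
  have hrs : (0:ℝ) < r ^ s := Real.rpow_pos_of_pos hr _
  have hrs1 : (0:ℝ) < r ^ (s - 1) := Real.rpow_pos_of_pos hr _
  have hrd : (0:ℝ) < r ^ d := Real.rpow_pos_of_pos hr _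
  have hrd1 : (0:ℝ) < r ^ (d - 1) := Real.rpow_pos_of_pos hr _
  have hEnn : 0 ≤ r * deriv g r / g r := div_nonneg (mul_nonneg hr.le hgdnn) hgr.le
  have hDen : (0:ℝ) < r ^ (s - 1) * g r * (s + r * deriv g r / g r) := by
    apply mul_pos (mul_pos hrs1 hgr); linarith
  have hfru : f r < Cu * (r ^ s * g r) := by
    rw [div_lt_iff₀ (by positivity)] at hC; linarith
  have hfrl : c * (r ^ s * g r) < f r := by
    rw [lt_div_iff₀ (by positivity)] at hc; linarith
  have hKr : r < K * r := by
    have := (lt_mul_iff_one_lt_left hr).2 hK1; linarith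
  have hc₀pos : 0 < Cu * d / ((K ^ d - 1) * (s + M)) :=
    div_pos (by positivity) (mul_pos hX hsM)
  have hC₀pos : 0 < Cu * d / ((1 - ((2:ℝ) ^ d)⁻¹) * s) :=
    div_pos (by positivity) (mul_pos hγ0 hs)
  have hfKr : 2 * Cu * (r ^ s * g r) ≤ f (K * r) := by
    have e : (K * r) ^ s = K ^ s * r ^ s := Real.mul_rpow hK0.le hr.le
    have hKs' : (0:ℝ) < K ^ s := Real.rpow_pos_of_pos hK0 _
    have hgKr0 : 0 < g (K * r) := lt_of_lt_of_le hgr hgKr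
    rw [lt_div_iff₀ (by rw [e]; exact mul_pos (by positivity) hgKr0)] at hcK
    have t1 : 2 * Cu * (r ^ s * g r) ≤ c * K ^ s * (r ^ s * g r) :=
      mul_le_mul_of_nonneg_right hKs (by positivity)
    have t2 : c * K ^ s * (r ^ s * g r) ≤ c * K ^ s * (r ^ s * g (K * r)) := by
      gcongr
    have t3 : c * K ^ s * (r ^ s * g (K * r)) = c * ((K * r) ^ s * g (K * r)) := by
      rw [e]; ring
    linarith
  obtain ⟨P, Q, hP, hQ, hPQ, hbp, hbm⟩ := kneser_one_sided f d hd hf hr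
  have hdP : derivWithin f (Set.Ioi r) r = P := hP.derivWithin (uniqueDiffWithinAt_Ioi r)
  have hdQ : derivWithin f (Set.Iio r) r = Q := hQ.derivWithin (uniqueDiffWithinAt_Iio r)
  have hpow : r ^ (s - 1) * r ^ d = r ^ s * r ^ (d - 1) := by
    rw [← Real.rpow_add hr, ← Real.rpow_add hr]; ring_nf
  rw [hdP, hdQ]
  refine ⟨?_, by gcongr, ?_⟩
  · -- lower bound
    have hPlow := hbp (K * r) hKr
    have ed : (K * r) ^ d = K ^ d * r ^ d := Real.mul_rpow hK0.le hr.le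
    have hXr : (K * r) ^ d - r ^ d = (K ^ d - 1) * r ^ d := by rw [ed]; ring
    rw [hXr] at hPlow
    have hLpos : (0:ℝ) < (K ^ d - 1) * r ^ d := mul_pos hX hrd
    have hnum : Cu * (r ^ s * g r) ≤ f (K * r) - f r := by linarith
    have hPlow2 : Cu * (r ^ s * g r) / ((K ^ d - 1) * r ^ d) * (d * r ^ (d - 1)) ≤ P := by
      refine le_trans ?_ hPlow
      gcongr
    rw [le_div_iff₀ hDen]
    refine le_trans ?_ hPlow2
    rw [div_mul_eq_mul_div (Cu * (r ^ s * g r)) ((K ^ d - 1) * r ^ d) (d * r ^ (d - 1)),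
      le_div_iff₀ hLpos]
    have key : Cu * d / ((K ^ d - 1) * (s + M)) * ((K ^ d - 1) * (s + M)) = Cu * d :=
      div_mul_cancel₀ _ (mul_pos hX hsM).ne'
    have lhs_eq : Cu * d / ((K ^ d - 1) * (s + M)) *
        (r ^ (s - 1) * g r * (s + r * deriv g r / g r)) * ((K ^ d - 1) * r ^ d) =
        (Cu * d / ((K ^ d - 1) * (s + M)) * (K ^ d - 1) * (s + r * deriv g r / g r)) *
          (r ^ (s - 1) * r ^ d * g r) := by
      ring
    have rhs_eq : Cu * (r ^ s * g r) * (d * r ^ (d - 1)) =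
        (Cu * d) * (r ^ (s - 1) * r ^ d * g r) := by
      rw [hpow]; ring
    rw [lhs_eq, rhs_eq]
    apply mul_le_mul_of_nonneg_right ?_ (by positivity)
    have h8 : (0:ℝ) ≤ Cu * d / ((K ^ d - 1) * (s + M)) * (K ^ d - 1) :=
      mul_nonneg hc₀pos.le hX.le
    calc Cu * d / ((K ^ d - 1) * (s + M)) * (K ^ d - 1) * (s + r * deriv g r / g r)
        ≤ Cu * d / ((K ^ d - 1) * (s + M)) * (K ^ d - 1) * (s + M) :=
          mul_le_mul_of_nonneg_left (by linarith) h8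
      _ = Cu * d := by rw [mul_assoc]; exact key
  · -- upper bound
    have hQup := hbm (r / 2) (by positivity) (by linarith)
    have hβ0 : (0:ℝ) < (2:ℝ) ^ d := by linarith
    have e2 : (r / 2) ^ d = r ^ d * ((2:ℝ) ^ d)⁻¹ := by
      rw [Real.div_rpow hr.le (by norm_num), div_eq_mul_inv]
    have hXr2 : r ^ d - (r / 2) ^ d = r ^ d * (1 - ((2:ℝ) ^ d)⁻¹) := by
      rw [e2]; ring
    rw [hXr2] at hQup
    have hL2 : (0:ℝ) < r ^ d * (1 - ((2:ℝ) ^ d)⁻¹) := mul_pos hrd hγ0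
    have hf2 : 0 < f (r / 2) := hfpos _ (by positivity)
    have hnum2 : f r - f (r / 2) ≤ Cu * (r ^ s * g r) := by linarith
    rw [div_le_iff₀ hDen]
    refine hQup.trans ?_
    have step1 : (f r - f (r / 2)) / (r ^ d * (1 - ((2:ℝ) ^ d)⁻¹)) * (d * r ^ (d - 1)) ≤
        Cu * (r ^ s * g r) / (r ^ d * (1 - ((2:ℝ) ^ d)⁻¹)) * (d * r ^ (d - 1)) := by
      gcongr
    refine step1.trans ?_
    rw [div_mul_eq_mul_div, div_le_iff₀ hL2]
    have key2 : Cu * d / ((1 - ((2:ℝ) ^ d)⁻¹) * s) * ((1 - ((2:ℝ) ^ d)⁻¹) * s) = Cu * d :=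
      div_mul_cancel₀ _ (mul_pos hγ0 hs).ne'
    have lhs_eq2 : Cu * (r ^ s * g r) * (d * r ^ (d - 1)) =
        (Cu * d) * (r ^ (s - 1) * r ^ d * g r) := by
      rw [hpow]; ring
    have rhs_eq2 : Cu * d / ((1 - ((2:ℝ) ^ d)⁻¹) * s) *
        (r ^ (s - 1) * g r * (s + r * deriv g r / g r)) * (r ^ d * (1 - ((2:ℝ) ^ d)⁻¹)) =
        (Cu * d / ((1 - ((2:ℝ) ^ d)⁻¹) * s) * (1 - ((2:ℝ) ^ d)⁻¹) *
          (s + r * deriv g r / g r)) * (r ^ (s - 1) * r ^ d * g r) := by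
      ring
    rw [lhs_eq2, rhs_eq2]
    apply mul_le_mul_of_nonneg_right ?_ (by positivity)
    have h9 : (0:ℝ) ≤ Cu * d / ((1 - ((2:ℝ) ^ d)⁻¹) * s) * (1 - ((2:ℝ) ^ d)⁻¹) :=
      mul_nonneg hC₀pos.le hγ0.le
    have e9 : Cu * d / ((1 - ((2:ℝ) ^ d)⁻¹) * s) * (1 - ((2:ℝ) ^ d)⁻¹) * s = Cu * d := by
      rw [mul_assoc]; exact key2
    calc Cu * d = Cu * d / ((1 - ((2:ℝ) ^ d)⁻¹) * s) * (1 - ((2:ℝ) ^ d)⁻¹) * s := e9.symm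
      _ ≤ Cu * d / ((1 - ((2:ℝ) ^ d)⁻¹) * s) * (1 - ((2:ℝ) ^ d)⁻¹) *
          (s + r * deriv g r / g r) :=
          mul_le_mul_of_nonneg_left (by linarith) h9

end Pointwise


set_option maxHeartbeats 1000000 in
theorem kneser_two_sided_gauge_deriv (f g : ℝ → ℝ) (d s : ℝ) (hd : 1 ≤ d)
    (hf : IsKneser f d) (hs : 0 < s)
    (hg_pos : ∀ r : ℝ, 0 < r → 0 < g r) (hg_mono : MonotoneOn g (Set.Ioi 0))
    (hg_diff : ∀ r : ℝ, 0 < r → DifferentiableAt ℝ g r)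
    (hg_slow : Filter.limsup (fun r : ℝ => ((r * deriv g r / g r : ℝ) : EReal))
      (𝓝[>] (0 : ℝ)) < ⊤)
    (h1 : 0 < Filter.liminf (fun r : ℝ => ((f r / (r ^ s * g r) : ℝ) : EReal)) (𝓝[>] (0 : ℝ)))
    (h2 : Filter.limsup (fun r : ℝ => ((f r / (r ^ s * g r) : ℝ) : EReal)) (𝓝[>] (0 : ℝ)) < ⊤) :
    0 < Filter.liminf
        (fun r : ℝ =>
          ((derivWithin f (Set.Ioi r) r /
              (r ^ (s - 1) * g r * (s + r * deriv g r / g r)) : ℝ) : EReal))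
        (𝓝[>] (0 : ℝ)) ∧
      Filter.liminf
        (fun r : ℝ =>
          ((derivWithin f (Set.Ioi r) r /
              (r ^ (s - 1) * g r * (s + r * deriv g r / g r)) : ℝ) : EReal))
        (𝓝[>] (0 : ℝ)) ≤
        Filter.limsup
        (fun r : ℝ =>
          ((derivWithin f (Set.Iio r) r /
              (r ^ (s - 1) * g r * (s + r * deriv g r / g r)) : ℝ) : EReal))
        (𝓝[>] (0 : ℝ)) ∧
      Filter.limsup
        (fun r : ℝ =>
          ((derivWithin f (Set.Iio r) r /
              (r ^ (s - 1) * g r * (s + r * deriv g r / g r)) : ℝ) : EReal))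
        (𝓝[>] (0 : ℝ)) < ⊤ := by
  have hd0 : (0:ℝ) < d := lt_of_lt_of_le one_pos hd
  set l : Filter ℝ := 𝓝[>] (0:ℝ) with hl
  -- extract the lower constant c
  obtain ⟨x₁, hx₁0, hx₁⟩ := exists_between h1
  have hy₁0 : (0:EReal) < min x₁ (((1:ℝ)):EReal) := lt_min hx₁0 (EReal.coe_pos.2 one_pos)
  have hy₁ne_top : min x₁ (((1:ℝ)):EReal) ≠ ⊤ :=
    ne_top_of_le_ne_top (EReal.coe_ne_top 1) (min_le_right x₁ _)
  have hy₁ne_bot : min x₁ (((1:ℝ)):EReal) ≠ ⊥ := by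
    intro h; rw [h] at hy₁0; exact (not_lt.2 bot_le) hy₁0
  set c : ℝ := (min x₁ (((1:ℝ)):EReal)).toReal with hcdef
  have hcoe : (c : EReal) = min x₁ (((1:ℝ)):EReal) := EReal.coe_toReal hy₁ne_top hy₁ne_bot
  have hc0 : 0 < c := EReal.coe_pos.1 (by rw [hcoe]; exact hy₁0)
  have hcev : ∀ᶠ r in l, c < f r / (r ^ s * g r) := by
    have hlt : (c : EReal) < Filter.liminf
        (fun r : ℝ => ((f r / (r ^ s * g r) : ℝ) : EReal)) l := by
      rw [hcoe]; exact lt_of_le_of_lt (min_le_left x₁ _) hx₁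
    exact (Filter.eventually_lt_of_lt_liminf hlt).mono fun r h => EReal.coe_lt_coe_iff.1 h
  -- extract the upper constant Cu
  have h1' : (0:EReal) < Filter.limsup
      (fun r : ℝ => ((f r / (r ^ s * g r) : ℝ) : EReal)) l :=
    lt_of_lt_of_le h1 Filter.liminf_le_limsup
  obtain ⟨x₂, hx₂1, hx₂2⟩ := exists_between h2
  have hx₂0 : (0:EReal) < x₂ := h1'.trans hx₂1
  have hx₂ne_bot : x₂ ≠ ⊥ := by
    intro h; rw [h] at hx₂0; exact (not_lt.2 bot_le) hx₂0
  set Cu : ℝ := x₂.toReal with hCudef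
  have hcoe2 : (Cu : EReal) = x₂ := EReal.coe_toReal hx₂2.ne hx₂ne_bot
  have hCu0 : 0 < Cu := EReal.coe_pos.1 (by rw [hcoe2]; exact hx₂0)
  have hCev : ∀ᶠ r in l, f r / (r ^ s * g r) < Cu := by
    have := Filter.eventually_lt_of_limsup_lt hx₂1
    exact this.mono fun r h => EReal.coe_lt_coe_iff.1 (by rw [hcoe2]; exact h)
  -- extract the slow-variation constant M
  obtain ⟨x₃, hx₃1, hx₃2⟩ := exists_between hg_slow
  have hy₃ne_top : max x₃ 0 ≠ ⊤ := (max_lt hx₃2 (by simp)).ne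
  have hy₃ne_bot : max x₃ 0 ≠ ⊥ := by
    have h := le_max_right x₃ (0:EReal)
    intro hb; rw [hb] at h; simp at h
  set M : ℝ := (max x₃ 0).toReal with hMdef
  have hcoe3 : (M : EReal) = max x₃ 0 := EReal.coe_toReal hy₃ne_top hy₃ne_bot
  have hMev : ∀ᶠ r in l, r * deriv g r / g r < M := by
    have := Filter.eventually_lt_of_limsup_lt hx₃1
    refine this.mono fun r h => EReal.coe_lt_coe_iff.1 ?_
    rw [hcoe3]
    exact lt_of_lt_of_le h (le_max_left _ _)
  -- the derivative of g is nonnegative on (0,∞)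
  have hgd : ∀ r : ℝ, 0 < r → 0 ≤ deriv g r := by
    intro r hr
    have hda : HasDerivAt g (deriv g r) r := (hg_diff r hr).hasDerivAt
    have hslope := hasDerivAt_iff_tendsto_slope.1 hda
    have hsub : Ioi r ⊆ {r}ᶜ := fun x hx => (mem_Ioi.1 hx).ne'
    have hslope' : Tendsto (slope g r) (𝓝[>] r) (𝓝 (deriv g r)) :=
      hslope.mono_left (nhdsWithin_mono r hsub)
    refine ge_of_tendsto hslope' ?_
    filter_upwards [self_mem_nhdsWithin] with z hz
    rw [slope_def_field]
    have hzr : r < z := mem_Ioi.1 hz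
    have := hg_mono (mem_Ioi.2 hr) (mem_Ioi.2 (hr.trans hzr)) hzr.le
    apply div_nonneg (by linarith) (by linarith)
  -- the dilation constant K
  set K : ℝ := max 2 ((2 * Cu / c) ^ s⁻¹) with hKdef
  have hK2 : (2:ℝ) ≤ K := le_max_left _ _
  have hK1 : (1:ℝ) < K := lt_of_lt_of_le one_lt_two hK2
  have hK0 : (0:ℝ) < K := lt_trans one_pos hK1
  have hKs : 2 * Cu ≤ c * K ^ s := by
    have h4 : (2 * Cu / c) ^ s⁻¹ ≤ K := le_max_right _ _
    have h5 : ((2 * Cu / c) ^ s⁻¹) ^ s ≤ K ^ s :=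
      Real.rpow_le_rpow (Real.rpow_nonneg (by positivity) _) h4 hs.le
    rw [← Real.rpow_mul (by positivity), inv_mul_cancel₀ hs.ne', Real.rpow_one] at h5
    rw [div_le_iff₀ hc0] at h5
    linarith [mul_comm (K ^ s) c]
  have hKd : (1:ℝ) < K ^ d := by
    have h := (Real.rpow_lt_rpow_left_iff (x := K) hK1).2 hd0
    rwa [Real.rpow_zero] at h
  have hX : (0:ℝ) < K ^ d - 1 := by linarith
  have hβ2 : (2:ℝ) ≤ (2:ℝ) ^ d := by
    have h := (Real.rpow_le_rpow_left_iff (x := (2:ℝ)) one_lt_two).2 hd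
    rwa [Real.rpow_one] at h
  have hγ0 : (0:ℝ) < 1 - ((2:ℝ) ^ d)⁻¹ := by
    have h1 : ((2:ℝ) ^ d)⁻¹ ≤ 2⁻¹ := inv_anti₀ (by norm_num) hβ2
    norm_num at h1 ⊢; linarith
  have hM0' : (0:ℝ) ≤ M := by
    have h := le_max_right x₃ (0:EReal)
    rw [← hcoe3] at h
    exact_mod_cast h
  have hsM : (0:ℝ) < s + M := by linarith
  have hc₀pos : 0 < Cu * d / ((K ^ d - 1) * (s + M)) :=
    div_pos (by positivity) (mul_pos hX hsM)
  have hC₀pos : 0 < Cu * d / ((1 - ((2:ℝ) ^ d)⁻¹) * s) :=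
    div_pos (by positivity) (mul_pos hγ0 hs)
  -- scaling map preserves the filter
  have hTK : Tendsto (fun r : ℝ => K * r) l l := by
    apply tendsto_nhdsWithin_of_tendsto_nhds_of_eventually_within
    · have h0 : Tendsto (fun r : ℝ => K * r) (𝓝 (0:ℝ)) (𝓝 (K * 0)) :=
        (continuous_const.mul continuous_id).tendsto 0
      rw [mul_zero] at h0
      exact h0.mono_left nhdsWithin_le_nhds
    · filter_upwards [self_mem_nhdsWithin] with r hr
      exact mem_Ioi.2 (mul_pos hK0 (mem_Ioi.1 hr))
  -- the main eventual estimate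
  have Ev : ∀ᶠ r in l,
      Cu * d / ((K ^ d - 1) * (s + M)) ≤
        derivWithin f (Set.Ioi r) r / (r ^ (s - 1) * g r * (s + r * deriv g r / g r)) ∧
      derivWithin f (Set.Ioi r) r / (r ^ (s - 1) * g r * (s + r * deriv g r / g r)) ≤
        derivWithin f (Set.Iio r) r / (r ^ (s - 1) * g r * (s + r * deriv g r / g r)) ∧
      derivWithin f (Set.Iio r) r / (r ^ (s - 1) * g r * (s + r * deriv g r / g r)) ≤
        Cu * d / ((1 - ((2:ℝ) ^ d)⁻¹) * s) := by
    filter_upwards [self_mem_nhdsWithin, hcev, hCev, hMev, hTK.eventually hcev]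
      with r hrmem hc hC hM hcK
    have hr : (0:ℝ) < r := mem_Ioi.1 hrmem
    have hgKr : g r ≤ g (K * r) :=
      hg_mono (mem_Ioi.2 hr) (mem_Ioi.2 (by positivity))
        (by nlinarith)
    exact pointwise_bound f g d s c Cu M K r hd hf hs hr (hg_pos r hr) hgKr (hgd r hr)
      hc0 hCu0 hK1 hKs hf.1 hc hC hM hcK
  -- conclude
  refine ⟨?_, ?_, ?_⟩
  · have e1 : ∀ᶠ r in l, ((Cu * d / ((K ^ d - 1) * (s + M)) : ℝ) : EReal) ≤
        ((derivWithin f (Set.Ioi r) r /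
          (r ^ (s - 1) * g r * (s + r * deriv g r / g r)) : ℝ) : EReal) :=
      Ev.mono fun r h => EReal.coe_le_coe_iff.2 h.1
    have h := Filter.liminf_le_liminf e1
    rw [Filter.liminf_const] at h
    exact lt_of_lt_of_le (EReal.coe_pos.2 hc₀pos) h
  · have e2 : ∀ᶠ r in l,
        ((derivWithin f (Set.Ioi r) r /
          (r ^ (s - 1) * g r * (s + r * deriv g r / g r)) : ℝ) : EReal) ≤
        ((derivWithin f (Set.Iio r) r /
          (r ^ (s - 1) * g r * (s + r * deriv g r / g r)) : ℝ) : EReal) :=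
      Ev.mono fun r h => EReal.coe_le_coe_iff.2 h.2.1
    exact le_trans (Filter.liminf_le_liminf e2) Filter.liminf_le_limsup
  · have e3 : ∀ᶠ r in l,
        ((derivWithin f (Set.Iio r) r /
          (r ^ (s - 1) * g r * (s + r * deriv g r / g r)) : ℝ) : EReal) ≤
        ((Cu * d / ((1 - ((2:ℝ) ^ d)⁻¹) * s) : ℝ) : EReal) :=
      Ev.mono fun r h => EReal.coe_le_coe_iff.2 h.2.2
    have h := Filter.limsup_le_limsup e3
    rw [Filter.limsup_const] at h
    exact lt_of_le_of_lt h (EReal.coe_lt_top _)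
end
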